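/- arXiv:math/0611432 — 5 statements merged into one kernel-verified Lean document; each statement's English description precedes it below -/
import Mathlib

section
/- Let α ∈ (1,2), assume ν̄(x) > 0 for all x > 0, and assume ν̄ is regularly varying at infinity with index −α, i.e. for every u > 0, ν̄(tu)/ν̄(t) → u^{−α} as t → ∞. Then ∫_0^∞ (1 − e^{−yu}) ν̄(u) du ~ (Γ(2−α)/(α−1)) · y^{−1} ν̄(1/y) as y → 0⁺, i.e. the ratio of the two sides tends to 1. -/
open MeasureTheory Filter Set Real Topology

lemma one_sub_exp_nonneg {v : ℝ} (hv : 0 ≤ v) : 0 ≤ 1 - Real.exp (-v) := by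
  have := Real.exp_le_one_iff.mpr (by linarith : -v ≤ 0); linarith

lemma one_sub_exp_le {v : ℝ} : 1 - Real.exp (-v) ≤ v := by
  have := Real.add_one_le_exp (-v); linarith

lemma one_sub_exp_le_one {v : ℝ} : 1 - Real.exp (-v) ≤ 1 := by
  nlinarith [Real.exp_pos (-v)]

lemma integrable_one_sub_exp_rpow (α : ℝ) (hα1 : 1 < α) (hα2 : α < 2) :
    IntegrableOn (fun v : ℝ => (1 - Real.exp (-v)) * v ^ (-α)) (Ioi 0) := by
  have hmeas : AEStronglyMeasurable (fun v : ℝ => (1 - Real.exp (-v)) * v ^ (-α))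
      (volume.restrict (Ioi (0:ℝ))) := by
    apply ContinuousOn.aestronglyMeasurable _ measurableSet_Ioi
    exact (continuousOn_const.sub (Real.continuous_exp.comp continuous_neg).continuousOn).mul
      (fun x hx => (Real.continuousAt_rpow_const x (-α) (Or.inl (ne_of_gt hx))).continuousWithinAt)
  rw [← Ioc_union_Ioi_eq_Ioi (zero_le_one : (0:ℝ) ≤ 1), integrableOn_union]
  constructor
  · refine Integrable.mono' (g := fun v : ℝ => v ^ (1 - α)) ?_
      (hmeas.mono_measure (Measure.restrict_mono Ioc_subset_Ioi_self le_rfl)) ?_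
    · have := intervalIntegral.intervalIntegrable_rpow' (a:=0) (b:=1) (r:=1-α) (by linarith)
      rwa [intervalIntegrable_iff_integrableOn_Ioc_of_le zero_le_one] at this
    · filter_upwards [ae_restrict_mem measurableSet_Ioc] with v hv
      have hv0 : 0 < v := hv.1
      rw [Real.norm_eq_abs, abs_of_nonneg (mul_nonneg (one_sub_exp_nonneg hv0.le)
        (Real.rpow_nonneg hv0.le _))]
      calc (1 - Real.exp (-v)) * v ^ (-α) ≤ v * v ^ (-α) := by
            exact mul_le_mul_of_nonneg_right one_sub_exp_le (Real.rpow_nonneg hv0.le _)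
        _ = v ^ (1 - α) := by
            rw [← Real.rpow_one_add' (le_of_lt hv0) (by ring_nf; nlinarith : (1:ℝ) + -α ≠ 0)]
            ring_nf
  · refine Integrable.mono' (g := fun v : ℝ => v ^ (-α)) ?_
      (hmeas.mono_measure (Measure.restrict_mono ((Ioi_subset_Ioi zero_le_one)) le_rfl)) ?_
    · exact integrableOn_Ioi_rpow_of_lt (by linarith) one_pos
    · filter_upwards [ae_restrict_mem measurableSet_Ioi] with v hv
      have hv0 : (0:ℝ) < v := lt_trans one_pos hv
      rw [Real.norm_eq_abs, abs_of_nonneg (mul_nonneg (one_sub_exp_nonneg hv0.le)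
        (Real.rpow_nonneg hv0.le _))]
      nth_rewrite 2 [← one_mul (v ^ (-α))]
      exact mul_le_mul_of_nonneg_right one_sub_exp_le_one (Real.rpow_nonneg hv0.le _)

lemma gamma_integral_aux (α : ℝ) (hα1 : 1 < α) (hα2 : α < 2) :
    ∫ v in Ioi (0:ℝ), (1 - Real.exp (-v)) * v ^ (-α)
      = Real.Gamma (2 - α) / (α - 1) := by
  set f : ℝ → ℝ := fun v => (1 - Real.exp (-v)) * (v ^ (1 - α) / (1 - α)) with hf
  set g1 : ℝ → ℝ := fun v => Real.exp (-v) * (v ^ (1 - α) / (1 - α)) with hg1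
  set g2 : ℝ → ℝ := fun v => (1 - Real.exp (-v)) * v ^ (-α) with hg2
  have hint1 : IntegrableOn g1 (Ioi (0:ℝ)) := by
    have := (Real.GammaIntegral_convergent (s := 2 - α) (by linarith)).div_const (1 - α)
    refine IntegrableOn.congr_fun this (fun v hv => ?_) measurableSet_Ioi
    simp only [hg1]
    rw [show (2:ℝ) - α - 1 = 1 - α by ring, mul_div_assoc]
  have hint2 : IntegrableOn g2 (Ioi (0:ℝ)) := integrable_one_sub_exp_rpow α hα1 hα2
  have hderiv : ∀ x ∈ Ioi (0:ℝ), HasDerivAt f (g1 x + g2 x) x := by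
    intro x hx
    have hx0 : (0:ℝ) < x := hx
    have h1 : HasDerivAt (fun v : ℝ => 1 - Real.exp (-v)) (Real.exp (-x)) x := by
      have := ((Real.hasDerivAt_exp (-x)).comp x (hasDerivAt_neg x)).const_sub 1
      simpa using this
    have h2 : HasDerivAt (fun v : ℝ => v ^ (1 - α) / (1 - α)) (x ^ (-α)) x := by
      have := (Real.hasDerivAt_rpow_const (x := x) (p := 1 - α)
        (Or.inl hx0.ne')).div_const (1 - α)
      have hne : (1:ℝ) - α ≠ 0 := by intro h; linarith [h]
      simpa [mul_div_assoc, mul_div_cancel_left₀ _ hne, show (1:ℝ) - α - 1 = -α by ring]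
        using this
    have h3 := h1.mul h2
    have heq : Real.exp (-x) * (x ^ (1 - α) / (1 - α)) + (1 - Real.exp (-x)) * x ^ (-α)
        = g1 x + g2 x := by simp only [hg1, hg2]
    rw [heq] at h3
    exact h3
  have hcont : ContinuousWithinAt f (Ici (0:ℝ)) 0 := by
    have hf0 : f 0 = 0 := by simp [hf]
    rw [ContinuousWithinAt, hf0]
    apply squeeze_zero_norm' (a := fun v => v ^ (2 - α) / (α - 1))
    · filter_upwards [self_mem_nhdsWithin] with v hv
      rcases eq_or_lt_of_le (show (0:ℝ) ≤ v from hv) with h | h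
      · simp [hf, ← h, Real.zero_rpow (by intro hc; linarith [hc] : (2:ℝ) - α ≠ 0)]
      · have hb : ‖f v‖ ≤ v * (v ^ (1 - α) / (α - 1)) := by
          rw [hf, Real.norm_eq_abs, abs_mul, abs_of_nonneg (one_sub_exp_nonneg h.le),
            abs_div, abs_of_nonneg (Real.rpow_nonneg h.le _),
            abs_of_neg (by linarith : (1:ℝ) - α < 0)]
          rw [neg_sub]
          exact mul_le_mul_of_nonneg_right one_sub_exp_le
            (div_nonneg (Real.rpow_nonneg h.le _) (by linarith))
        refine hb.trans (le_of_eq ?_)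
        rw [← mul_div_assoc, ← Real.rpow_one_add' h.le (by intro hc; linarith [hc])]
        ring_nf
    · have : Tendsto (fun v : ℝ => v ^ (2 - α)) (𝓝[Ici 0] 0) (𝓝 ((0:ℝ) ^ (2 - α))) := by
        apply Tendsto.mono_left _ nhdsWithin_le_nhds
        exact (Real.continuousAt_rpow_const 0 (2 - α) (Or.inr (by linarith))).tendsto
      rw [Real.zero_rpow (by intro hc; linarith [hc] : (2:ℝ) - α ≠ 0)] at this
      simpa using this.div_const (α - 1)
  have hlim : Tendsto f atTop (𝓝 0) := by
    apply squeeze_zero_norm' (a := fun v => v ^ (1 - α) / (α - 1))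
    · filter_upwards [eventually_ge_atTop (1:ℝ)] with v hv
      have hv0 : (0:ℝ) < v := lt_of_lt_of_le one_pos hv
      rw [hf, Real.norm_eq_abs, abs_mul, abs_of_nonneg (one_sub_exp_nonneg hv0.le),
        abs_div, abs_of_nonneg (Real.rpow_nonneg hv0.le _),
        abs_of_neg (by linarith : (1:ℝ) - α < 0), neg_sub]
      calc (1 - Real.exp (-v)) * (v ^ (1 - α) / (α - 1))
          ≤ 1 * (v ^ (1 - α) / (α - 1)) :=
            mul_le_mul_of_nonneg_right one_sub_exp_le_one
              (div_nonneg (Real.rpow_nonneg hv0.le _) (by linarith))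
        _ = v ^ (1 - α) / (α - 1) := one_mul _
    · have : Tendsto (fun v : ℝ => v ^ (-(α - 1))) atTop (𝓝 0) :=
        tendsto_rpow_neg_atTop (by linarith)
      have h2 := this.div_const (α - 1)
      simpa [show -(α - 1) = 1 - α by ring] using h2
  have key := integral_Ioi_of_hasDerivAt_of_tendsto
    (a := 0) (f := f) (f' := fun x => g1 x + g2 x) (m := 0)
    hcont hderiv (hint1.add hint2) hlim
  have hf0 : f 0 = 0 := by simp [hf]
  rw [hf0, sub_zero] at key
  rw [integral_add hint1 hint2] at key
  have hG : ∫ v in Ioi (0:ℝ), g1 v = Real.Gamma (2 - α) / (1 - α) := by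
    rw [Real.Gamma_eq_integral (by linarith : (0:ℝ) < 2 - α)]
    rw [← integral_div]
    refine setIntegral_congr_fun measurableSet_Ioi (fun v hv => ?_)
    simp only [hg1]
    rw [show (2:ℝ) - α - 1 = 1 - α by ring, mul_div_assoc]
  have : ∫ v in Ioi (0:ℝ), g2 v = -(Real.Gamma (2 - α) / (1 - α)) := by
    rw [hG] at key; linarith
  show (∫ v in Ioi (0:ℝ), g2 v) = _
  rw [this, show (1:ℝ) - α = -(α - 1) by ring, div_neg]
  ring

lemma geom_chain_up' {nb : ℝ → ℝ} {ρ T₀ : ℝ} (hT₀ : 1 ≤ T₀) (hρ : 0 ≤ ρ)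
    (h : ∀ t, T₀ ≤ t → nb (2 * t) ≤ ρ * nb t) :
    ∀ k : ℕ, ∀ t, T₀ ≤ t → nb (2 ^ k * t) ≤ ρ ^ k * nb t := by
  intro k
  induction k with
  | zero => intro t ht; simp
  | succ k ih =>
    intro t ht
    have ht0 : (0:ℝ) < t := lt_of_lt_of_le one_pos (le_trans hT₀ ht)
    have h1 : T₀ ≤ 2 ^ k * t := le_trans ht (le_mul_of_one_le_left ht0.le (one_le_pow₀ one_le_two))
    have h2 := h (2 ^ k * t) h1
    have h3 := ih t ht
    calc nb (2 ^ (k+1) * t) = nb (2 * (2 ^ k * t)) := by ring_nf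
      _ ≤ ρ * nb (2 ^ k * t) := h2
      _ ≤ ρ * (ρ ^ k * nb t) := mul_le_mul_of_nonneg_left h3 hρ
      _ = ρ ^ (k+1) * nb t := by ring

lemma geom_chain_low' {nb : ℝ → ℝ} {τ T₀ : ℝ} (hT₀ : 1 ≤ T₀) (hτ : 0 ≤ τ)
    (h : ∀ t, T₀ ≤ t → τ * nb t ≤ nb (2 * t)) :
    ∀ k : ℕ, ∀ t, T₀ ≤ t → τ ^ k * nb t ≤ nb (2 ^ k * t) := by
  intro k
  induction k with
  | zero => intro t ht; simp
  | succ k ih =>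
    intro t ht
    have ht0 : (0:ℝ) < t := lt_of_lt_of_le one_pos (le_trans hT₀ ht)
    have h1 : T₀ ≤ 2 ^ k * t := le_trans ht (le_mul_of_one_le_left ht0.le (one_le_pow₀ one_le_two))
    calc τ ^ (k+1) * nb t = τ * (τ ^ k * nb t) := by ring
      _ ≤ τ * nb (2 ^ k * t) := mul_le_mul_of_nonneg_left (ih t ht) hτ
      _ ≤ nb (2 * (2 ^ k * t)) := h _ h1
      _ = nb (2 ^ (k+1) * t) := by ring_nf

lemma geom_chain_down' {nb : ℝ → ℝ} {σ T₀ : ℝ} (hT₀ : 1 ≤ T₀) (hσ : 0 ≤ σ)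
    (h : ∀ t, T₀ ≤ t → nb (t / 2) ≤ σ * nb t) :
    ∀ k : ℕ, ∀ t, T₀ * 2 ^ k ≤ t → nb (t / 2 ^ k) ≤ σ ^ k * nb t := by
  intro k
  induction k with
  | zero => intro t ht; simp
  | succ k ih =>
    intro t ht
    have hT0 : (0:ℝ) < T₀ := lt_of_lt_of_le one_pos hT₀
    have h1 : T₀ * 2 ^ k ≤ t := by
      refine le_trans ?_ ht
      have : (2:ℝ) ^ k ≤ 2 ^ (k+1) := by
        apply pow_le_pow_right₀ one_le_two; omega
      nlinarith
    have h2 : T₀ ≤ t / 2 ^ k := by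
      rw [le_div_iff₀ (by positivity)]
      calc T₀ * 2 ^ k ≤ T₀ * 2 ^ (k+1) := by
            have : (2:ℝ) ^ k ≤ 2 ^ (k+1) := by apply pow_le_pow_right₀ one_le_two; omega
            nlinarith
        _ ≤ t := ht
    calc nb (t / 2 ^ (k+1)) = nb ((t / 2 ^ k) / 2) := by ring_nf
      _ ≤ σ * nb (t / 2 ^ k) := h _ h2
      _ ≤ σ * (σ ^ k * nb t) := mul_le_mul_of_nonneg_left (ih t h1) hσ
      _ = σ ^ (k+1) * nb t := by ring

lemma rpow_logb_comm {θ v : ℝ} (hθ : 0 < θ) (hv : 0 < v) :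
    θ ^ Real.logb 2 v = v ^ Real.logb 2 θ := by
  calc θ ^ Real.logb 2 v = (2 ^ Real.logb 2 θ : ℝ) ^ Real.logb 2 v := by
        rw [Real.rpow_logb two_pos (by norm_num) hθ]
    _ = (2:ℝ) ^ (Real.logb 2 θ * Real.logb 2 v) := (Real.rpow_mul two_pos.le _ _).symm
    _ = (2:ℝ) ^ (Real.logb 2 v * Real.logb 2 θ) := by ring_nf
    _ = ((2:ℝ) ^ Real.logb 2 v) ^ Real.logb 2 θ := Real.rpow_mul two_pos.le _ _
    _ = v ^ Real.logb 2 θ := by rw [Real.rpow_logb two_pos (by norm_num) hv]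

lemma exists_eta (α : ℝ) (hα1 : 1 < α) (hα2 : α < 2) :
    ∃ η : ℝ, 0 < η ∧ η < 1 ∧ Real.logb 2 (1+η) < α - 1 ∧
      Real.logb 2 (1+η) < 2 - α ∧ (2:ℝ) ^ (α-2) < 1 - η := by
  set δ : ℝ := min (α-1) (2-α) / 2 with hδ
  have hδpos : 0 < δ := by
    apply div_pos _ two_pos
    exact lt_min (by linarith) (by linarith)
  have h2δ : 1 < (2:ℝ) ^ δ := Real.one_lt_rpow_iff_of_pos two_pos |>.mpr (Or.inl ⟨one_lt_two, hδpos⟩)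
  have hpow : (2:ℝ) ^ (α-2) < 1 := Real.rpow_lt_one_of_one_lt_of_neg one_lt_two (by linarith)
  have hpow0 : (0:ℝ) < (2:ℝ) ^ (α-2) := Real.rpow_pos_of_pos two_pos _
  have hηpos : 0 < min ((2:ℝ)^δ - 1) ((1 - (2:ℝ)^(α-2))/2) :=
    lt_min (by linarith) (by linarith)
  refine ⟨min ((2:ℝ)^δ - 1) ((1 - (2:ℝ)^(α-2))/2), hηpos, ?_, ?_, ?_, ?_⟩
  · calc min ((2:ℝ)^δ - 1) ((1 - (2:ℝ)^(α-2))/2) ≤ (1 - (2:ℝ)^(α-2))/2 := min_le_right _ _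
      _ < 1 := by linarith
  · have h1 : (1:ℝ) + min ((2:ℝ)^δ - 1) ((1 - (2:ℝ)^(α-2))/2) ≤ (2:ℝ)^δ := by
      have := min_le_left ((2:ℝ)^δ - 1) ((1 - (2:ℝ)^(α-2))/2); linarith
    calc Real.logb 2 (1 + min ((2:ℝ)^δ - 1) ((1 - (2:ℝ)^(α-2))/2))
        ≤ Real.logb 2 ((2:ℝ)^δ) := Real.logb_le_logb_of_le one_lt_two (by linarith) h1
      _ = δ := Real.logb_rpow two_pos (by norm_num)
      _ < α - 1 := by
          rw [hδ]
          have : min (α-1) (2-α) ≤ α - 1 := min_le_left _ _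
          linarith [lt_min (show (0:ℝ) < α-1 by linarith) (show (0:ℝ) < 2-α by linarith)]
  · have h1 : (1:ℝ) + min ((2:ℝ)^δ - 1) ((1 - (2:ℝ)^(α-2))/2) ≤ (2:ℝ)^δ := by
      have := min_le_left ((2:ℝ)^δ - 1) ((1 - (2:ℝ)^(α-2))/2); linarith
    calc Real.logb 2 (1 + min ((2:ℝ)^δ - 1) ((1 - (2:ℝ)^(α-2))/2))
        ≤ Real.logb 2 ((2:ℝ)^δ) := Real.logb_le_logb_of_le one_lt_two (by linarith) h1
      _ = δ := Real.logb_rpow two_pos (by norm_num)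
      _ < 2 - α := by
          rw [hδ]
          have : min (α-1) (2-α) ≤ 2 - α := min_le_right _ _
          linarith [lt_min (show (0:ℝ) < α-1 by linarith) (show (0:ℝ) < 2-α by linarith)]
  · have := min_le_right ((2:ℝ)^δ - 1) ((1 - (2:ℝ)^(α-2))/2)
    linarith

lemma potter_up {nb : ℝ → ℝ} {ρ T₀ : ℝ} (hT₀ : 1 ≤ T₀) (hρ0 : 0 < ρ) (hρ1 : ρ ≤ 1)
    (hnn : ∀ x : ℝ, 0 ≤ nb x)
    (hmono : ∀ ⦃x x'⦄, 0 < x → x ≤ x' → nb x' ≤ nb x)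
    (h : ∀ t, T₀ ≤ t → nb (2 * t) ≤ ρ * nb t)
    {y : ℝ} (hy : 0 < y) (hyT : T₀ ≤ 1/y) {v : ℝ} (hv : 1 ≤ v) :
    nb (v/y) ≤ ρ⁻¹ * v ^ Real.logb 2 ρ * nb (1/y) := by
  set k : ℕ := ⌊Real.logb 2 v⌋₊ with hk
  have hv0 : (0:ℝ) < v := lt_of_lt_of_le one_pos hv
  have hlogb0 : 0 ≤ Real.logb 2 v := Real.logb_nonneg one_lt_two hv
  have h2k : (2:ℝ) ^ k ≤ v := by
    rw [← Real.rpow_natCast 2 k]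
    calc (2:ℝ) ^ (k:ℝ) ≤ (2:ℝ) ^ Real.logb 2 v :=
          Real.rpow_le_rpow_of_exponent_le one_le_two (Nat.floor_le hlogb0)
      _ = v := Real.rpow_logb two_pos (by norm_num) hv0
  have step1 : nb (v/y) ≤ nb (2 ^ k * (1/y)) := by
    apply hmono (by positivity)
    rw [div_eq_mul_one_div v y]
    exact mul_le_mul_of_nonneg_right h2k (by positivity)
  have step2 : nb (2 ^ k * (1/y)) ≤ ρ ^ k * nb (1/y) :=
    geom_chain_up' hT₀ hρ0.le h k (1/y) hyT
  have step3 : ρ ^ k ≤ ρ⁻¹ * v ^ Real.logb 2 ρ := by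
    have hk2 : Real.logb 2 v - 1 ≤ (k:ℝ) := by
      have := Nat.lt_floor_add_one (Real.logb 2 v)
      push_cast
      linarith
    calc ρ ^ k = ρ ^ (k:ℝ) := (Real.rpow_natCast ρ k).symm
      _ ≤ ρ ^ (Real.logb 2 v - 1) := Real.rpow_le_rpow_of_exponent_ge hρ0 hρ1 hk2
      _ = ρ ^ Real.logb 2 v * ρ⁻¹ := by
          rw [Real.rpow_sub hρ0, Real.rpow_one, div_eq_mul_inv]
      _ = ρ⁻¹ * v ^ Real.logb 2 ρ := by rw [rpow_logb_comm hρ0 hv0]; ring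
  calc nb (v/y) ≤ ρ ^ k * nb (1/y) := le_trans step1 step2
    _ ≤ ρ⁻¹ * v ^ Real.logb 2 ρ * nb (1/y) :=
        mul_le_mul_of_nonneg_right step3 (hnn _)

lemma potter_down {nb : ℝ → ℝ} {σ T₀ : ℝ} (hT₀ : 1 ≤ T₀) (hσ1 : 1 ≤ σ)
    (hnn : ∀ x : ℝ, 0 ≤ nb x)
    (hmono : ∀ ⦃x x'⦄, 0 < x → x ≤ x' → nb x' ≤ nb x)
    (h : ∀ t, T₀ ≤ t → nb (t/2) ≤ σ * nb t)
    {y : ℝ} (hy : 0 < y) {v : ℝ} (hv0 : 0 < v) (hv1 : v ≤ 1)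
    (hvy : 2 * T₀ * y < v) :
    nb (v/y) ≤ σ * v ^ (-Real.logb 2 σ) * nb (1/y) := by
  have hσ0 : (0:ℝ) < σ := lt_of_lt_of_le one_pos hσ1
  have hT0 : (0:ℝ) < T₀ := lt_of_lt_of_le one_pos hT₀
  set k : ℕ := ⌈Real.logb 2 v⁻¹⌉₊ with hk
  have hvinv : 1 ≤ v⁻¹ := (one_le_inv_iff₀.mpr ⟨hv0, hv1⟩)
  have hl0 : 0 ≤ Real.logb 2 v⁻¹ := Real.logb_nonneg one_lt_two hvinv
  have hk1 : Real.logb 2 v⁻¹ ≤ (k:ℝ) := Nat.le_ceil _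
  have hk2 : (k:ℝ) < Real.logb 2 v⁻¹ + 1 := by
    have := Nat.ceil_lt_add_one hl0
    push_cast at this ⊢
    linarith
  have h2k : v⁻¹ ≤ (2:ℝ) ^ k := by
    rw [← Real.rpow_natCast 2 k]
    calc v⁻¹ = (2:ℝ) ^ Real.logb 2 v⁻¹ := (Real.rpow_logb two_pos (by norm_num) (by positivity)).symm
      _ ≤ (2:ℝ) ^ (k:ℝ) := Real.rpow_le_rpow_of_exponent_le one_le_two hk1
  have h2kup : (2:ℝ) ^ k ≤ 2 * v⁻¹ := by
    rw [← Real.rpow_natCast 2 k]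
    calc (2:ℝ) ^ (k:ℝ) ≤ (2:ℝ) ^ (Real.logb 2 v⁻¹ + 1) :=
          Real.rpow_le_rpow_of_exponent_le one_le_two hk2.le
      _ = 2 * v⁻¹ := by
          rw [Real.rpow_add two_pos, Real.rpow_one,
            Real.rpow_logb two_pos (by norm_num) (by positivity)]
          ring
  have hchain : T₀ * 2 ^ k ≤ 1/y := by
    have h1 : 2 * T₀ / v < 1/y := by
      rw [div_lt_div_iff₀ hv0 hy]
      nlinarith
    calc T₀ * 2 ^ k ≤ T₀ * (2 * v⁻¹) := mul_le_mul_of_nonneg_left h2kup hT0.le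
      _ = 2 * T₀ / v := by field_simp
      _ ≤ 1/y := h1.le
  have step2 : nb ((1/y) / 2 ^ k) ≤ σ ^ k * nb (1/y) :=
    geom_chain_down' hT₀ hσ0.le h k (1/y) hchain
  have step1 : nb (v/y) ≤ nb ((1/y) / 2 ^ k) := by
    apply hmono (by positivity)
    have hle : (1:ℝ) / 2 ^ k ≤ v := by
      rw [div_le_iff₀ (by positivity)]
      have := mul_le_mul_of_nonneg_left h2k hv0.le
      rw [mul_inv_cancel₀ hv0.ne'] at this
      linarith
    calc (1/y) / 2 ^ k = (1 / 2 ^ k) / y := by ring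
      _ ≤ v / y := by gcongr
  have step3 : σ ^ k ≤ σ * v ^ (-Real.logb 2 σ) := by
    calc σ ^ k = σ ^ (k:ℝ) := (Real.rpow_natCast σ k).symm
      _ ≤ σ ^ (Real.logb 2 v⁻¹ + 1) := Real.rpow_le_rpow_of_exponent_le hσ1 hk2.le
      _ = σ ^ Real.logb 2 v⁻¹ * σ := by rw [Real.rpow_add hσ0, Real.rpow_one]
      _ = σ * v ^ (-Real.logb 2 σ) := by
          rw [rpow_logb_comm hσ0 (show (0:ℝ) < v⁻¹ by positivity),
            Real.inv_rpow hv0.le, ← Real.rpow_neg hv0.le]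
          ring
  calc nb (v/y) ≤ σ ^ k * nb (1/y) := le_trans step1 step2
    _ ≤ σ * v ^ (-Real.logb 2 σ) * nb (1/y) := mul_le_mul_of_nonneg_right step3 (hnn _)

lemma tsq_tendsto {nb : ℝ → ℝ} {τ T₀ : ℝ} (hT₀ : 1 ≤ T₀) (hτ0 : 0 < τ) (h4τ : 1 < 4*τ)
    (hnbT : 0 < nb T₀)
    (hmono : ∀ ⦃x x'⦄, 0 < x → x ≤ x' → nb x' ≤ nb x)
    (hchain : ∀ k : ℕ, ∀ t, T₀ ≤ t → τ ^ k * nb t ≤ nb (2 ^ k * t)) :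
    Tendsto (fun t : ℝ => t^2 * nb t) atTop atTop := by
  have hT0 : (0:ℝ) < T₀ := lt_of_lt_of_le one_pos hT₀
  rw [tendsto_atTop_atTop]
  intro M
  have hg : Tendsto (fun k : ℕ => (4*τ)^k) atTop atTop :=
    tendsto_pow_atTop_atTop_of_one_lt h4τ
  obtain ⟨K, hK⟩ := (hg.eventually_ge_atTop (M / (T₀^2 * nb T₀ * τ))).exists
  refine ⟨T₀ * 2^K, fun t ht => ?_⟩
  have ht0 : (0:ℝ) < t := lt_of_lt_of_le (by positivity) ht
  have htT : (2:ℝ)^K ≤ t/T₀ := by rw [le_div_iff₀ hT0]; linarith [ht]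
  have h1le : (1:ℝ) ≤ t/T₀ := le_trans (one_le_pow₀ one_le_two) htT
  have hlogb0 : 0 ≤ Real.logb 2 (t/T₀) := Real.logb_nonneg one_lt_two h1le
  set k : ℕ := ⌊Real.logb 2 (t/T₀)⌋₊ with hkdef
  have hkK : K ≤ k := by
    apply Nat.le_floor
    calc (K:ℝ) = Real.logb 2 ((2:ℝ)^(K:ℝ)) := (Real.logb_rpow two_pos (by norm_num)).symm
      _ ≤ Real.logb 2 (t/T₀) := by
          apply Real.logb_le_logb_of_le one_lt_two (by positivity)
          rw [Real.rpow_natCast]; exact htT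
  have h2k : (2:ℝ)^k ≤ t/T₀ := by
    rw [← Real.rpow_natCast 2 k]
    calc (2:ℝ) ^ (k:ℝ) ≤ (2:ℝ) ^ Real.logb 2 (t/T₀) :=
          Real.rpow_le_rpow_of_exponent_le one_le_two (Nat.floor_le hlogb0)
      _ = t/T₀ := Real.rpow_logb two_pos (by norm_num) (by positivity)
  have h2k1 : t/T₀ ≤ (2:ℝ)^(k+1) := by
    rw [← Real.rpow_natCast 2 (k+1)]
    calc t/T₀ = (2:ℝ) ^ Real.logb 2 (t/T₀) := (Real.rpow_logb two_pos (by norm_num) (by positivity)).symm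
      _ ≤ (2:ℝ) ^ ((k:ℝ)+1) := by
          apply Real.rpow_le_rpow_of_exponent_le one_le_two
          have := Nat.lt_floor_add_one (Real.logb 2 (t/T₀))
          push_cast at this ⊢
          linarith
      _ = (2:ℝ) ^ (((k+1 : ℕ)):ℝ) := by push_cast; ring_nf
  have hnbt : τ ^ (k+1) * nb T₀ ≤ nb t := by
    have htle : t ≤ 2^(k+1) * T₀ := by
      rw [div_le_iff₀ hT0] at h2k1; linarith
    calc τ ^ (k+1) * nb T₀ ≤ nb (2^(k+1) * T₀) := hchain (k+1) T₀ le_rfl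
      _ ≤ nb t := hmono ht0 htle
  have htsq : (T₀ * 2^k)^2 ≤ t^2 := by
    have h' : T₀ * 2^k ≤ t := by rw [le_div_iff₀ hT0] at h2k; linarith
    have : (0:ℝ) ≤ T₀ * 2^k := by positivity
    nlinarith
  have heq : (T₀ * 2^k)^2 * (τ^(k+1) * nb T₀) = (T₀^2 * nb T₀ * τ) * (4*τ)^k := by
    have e1 : ((2:ℝ)^k)^2 = 4^k := by
      rw [← pow_mul, mul_comm, pow_mul]; norm_num
    rw [mul_pow, e1, mul_pow, pow_succ]
    ring
  have hMle : M ≤ (T₀^2 * nb T₀ * τ) * (4*τ)^K := by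
    have hc : (0:ℝ) < T₀^2 * nb T₀ * τ := by positivity
    rw [div_le_iff₀ hc] at hK
    linarith [hK]
  calc M ≤ (T₀^2 * nb T₀ * τ) * (4*τ)^K := hMle
    _ ≤ (T₀^2 * nb T₀ * τ) * (4*τ)^k := by
        apply mul_le_mul_of_nonneg_left _ (by positivity)
        exact pow_le_pow_right₀ (by linarith) hkK
    _ = (T₀ * 2^k)^2 * (τ^(k+1) * nb T₀) := heq.symm
    _ ≤ t^2 * (τ^(k+1) * nb T₀) := by
        apply mul_le_mul_of_nonneg_right htsq (by positivity)
    _ ≤ t^2 * nb t := mul_le_mul_of_nonneg_left hnbt (by positivity)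

section TailLemmas
variable {ν : Measure ℝ}

lemma tail_meas (ν : Measure ℝ) : Measurable (fun x : ℝ => (ν (Set.Ioi x)).toReal) := by
  have h1 : Antitone (fun x : ℝ => ν (Set.Ioi x)) :=
    fun x y hxy => measure_mono (Ioi_subset_Ioi hxy)
  exact ENNReal.measurable_toReal.comp h1.measurable

lemma tail_fin (hpos : ∀ x : ℝ, 0 < x → 0 < (ν (Set.Ioi x)).toReal)
    {x : ℝ} (hx : 0 < x) : ν (Set.Ioi x) ≠ ⊤ := by
  intro h
  have := hpos x hx
  rw [h] at this
  simp at this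

lemma tail_mono (hpos : ∀ x : ℝ, 0 < x → 0 < (ν (Set.Ioi x)).toReal)
    {x x' : ℝ} (hx : 0 < x) (hxx : x ≤ x') :
    (ν (Set.Ioi x')).toReal ≤ (ν (Set.Ioi x)).toReal :=
  ENNReal.toReal_mono (tail_fin hpos hx) (measure_mono (Ioi_subset_Ioi hxx))

lemma tail_markov (hν0 : ν (Set.Iic 0) = 0) (hint : Integrable (fun l : ℝ => l) ν)
    {x : ℝ} (hx : 0 < x) :
    x * (ν (Set.Ioi x)).toReal ≤ ∫ l, l ∂ν := by
  have hnn : 0 ≤ᵐ[ν] fun l : ℝ => l := by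
    rw [Filter.EventuallyLE, ae_iff]
    refine measure_mono_null (fun l hl => ?_) hν0
    simp only [Pi.zero_apply, not_le, mem_setOf_eq] at hl ⊢
    exact hl.le
  have h := mul_meas_ge_le_integral_of_nonneg hnn hint x
  refine le_trans ?_ h
  have hsub : Set.Ioi x ⊆ {l : ℝ | x ≤ l} := fun l (hl : x < l) => show x ≤ l from le_of_lt hl
  have hfin : ν {l : ℝ | x ≤ l} ≠ ⊤ := by
    have h2 := hint.measure_norm_ge_lt_top hx
    refine ne_top_of_le_ne_top h2.ne (measure_mono (fun l hl => ?_))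
    simp only [mem_setOf_eq, Real.norm_eq_abs] at hl ⊢
    exact le_trans hl (le_abs_self l)
  exact mul_le_mul_of_nonneg_left (ENNReal.toReal_mono hfin (measure_mono hsub)) hx.le

end TailLemmas

set_option maxHeartbeats 1600000 in
/-- Let `ν` be a measure on `(0,∞)` with finite, positive mean, whose tail
`ν̄(x) = ν((x,∞))` is positive and regularly varying at infinity with index `-α`,
`α ∈ (1,2)`. Then `∫_0^∞ (1 - e^{-y u}) ν̄(u) du ~ (Γ(2-α)/(α-1)) y⁻¹ ν̄(1/y)` as
`y → 0⁺`, i.e. the ratio of the two sides tends to `1`. -/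
theorem tail_integral_asymptotic_regularly_varying
    (ν : Measure ℝ) (hν0 : ν (Set.Iic 0) = 0)
    (hint : Integrable (fun l : ℝ => l) ν)
    (hmpos : 0 < ∫ l, l ∂ν)
    (α : ℝ) (hα1 : 1 < α) (hα2 : α < 2)
    (hpos : ∀ x : ℝ, 0 < x → 0 < (ν (Set.Ioi x)).toReal)
    (hrv : ∀ u : ℝ, 0 < u →
      Tendsto (fun t : ℝ => (ν (Set.Ioi (t * u))).toReal / (ν (Set.Ioi t)).toReal)
        atTop (nhds (u ^ (-α)))) :
    Tendsto
      (fun y : ℝ =>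
        (∫ u in Set.Ioi (0 : ℝ),
            (1 - Real.exp (-(y * u))) * (ν (Set.Ioi u)).toReal) /
          ((Real.Gamma (2 - α) / (α - 1)) * y⁻¹ * (ν (Set.Ioi (1 / y))).toReal))
      (nhdsWithin 0 (Set.Ioi 0)) (nhds 1) := by
  set nb : ℝ → ℝ := fun x => (ν (Set.Ioi x)).toReal with hnbdef
  set M : ℝ := ∫ l, l ∂ν with hMdef
  set C : ℝ := Real.Gamma (2 - α) / (α - 1) with hCdef
  have hC0 : 0 < C := div_pos (Real.Gamma_pos_of_pos (by linarith)) (by linarith)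
  have hnbnn : ∀ x : ℝ, 0 ≤ nb x := fun _ => ENNReal.toReal_nonneg
  have hnbpos : ∀ x : ℝ, 0 < x → 0 < nb x := hpos
  have hmono : ∀ ⦃x x' : ℝ⦄, 0 < x → x ≤ x' → nb x' ≤ nb x :=
    fun x x' hx hxx => tail_mono hpos hx hxx
  have hnbmeas : Measurable nb := tail_meas ν
  have hmarkov : ∀ x : ℝ, 0 < x → x * nb x ≤ M := fun x hx => tail_markov hν0 hint hx
  have hM0 : 0 < M := hmpos
  obtain ⟨η, hη0, hη1, hηa, hηb, hηc⟩ := exists_eta α hα1 hα2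
  set ρ : ℝ := 2^(-α) * (1+η) with hρdef
  set σ : ℝ := 2^α * (1+η) with hσdef
  set τ : ℝ := 2^(-α) * (1-η) with hτdef
  have h2αpos : (0:ℝ) < 2^α := Real.rpow_pos_of_pos two_pos α
  have h2negpos : (0:ℝ) < (2:ℝ)^(-α) := Real.rpow_pos_of_pos two_pos (-α)
  have hρ0 : 0 < ρ := mul_pos h2negpos (by linarith)
  have h1ηlt : (1:ℝ)+η < 2^α := by
    have h := Real.rpow_lt_rpow_of_exponent_lt one_lt_two
      (show Real.logb 2 (1+η) < α by linarith)
    rwa [Real.rpow_logb two_pos (by norm_num) (by linarith)] at h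
  have hρ1 : ρ < 1 := by
    have hmul : (2:ℝ)^(-α) * 2^α = 1 := by
      rw [← Real.rpow_add two_pos]; simp
    rw [hρdef]; nlinarith
  have hσ1 : 1 ≤ σ := by rw [hσdef]; nlinarith
  have hτ0 : 0 < τ := mul_pos h2negpos (by linarith)
  have h4τ : 1 < 4*τ := by
    have hmul : (2:ℝ)^(-α) * 2^(α-2) = 1/4 := by
      rw [← Real.rpow_add two_pos, show -α + (α-2) = ((-2:ℤ):ℝ) by push_cast; ring,
        Real.rpow_intCast]
      norm_num
    rw [hτdef]; nlinarith
  have hLρ : Real.logb 2 ρ = -α + Real.logb 2 (1+η) := by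
    rw [hρdef, Real.logb_mul (ne_of_gt h2negpos) (by linarith),
      Real.logb_rpow two_pos (by norm_num)]
  have hLρlt : Real.logb 2 ρ < -1 := by rw [hLρ]; linarith
  have hLσ : Real.logb 2 σ = α + Real.logb 2 (1+η) := by
    rw [hσdef, Real.logb_mul (ne_of_gt h2αpos) (by linarith),
      Real.logb_rpow two_pos (by norm_num)]
  have hLσlt : Real.logb 2 σ < 2 := by rw [hLσ]; linarith
  -- eventual regular variation inequalities
  have e1 : ∀ᶠ t in atTop, nb (t*2) / nb t < ρ :=
    (hrv 2 two_pos).eventually_lt_const (by nlinarith : (2:ℝ)^(-α) < ρ)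
  have e2 : ∀ᶠ t in atTop, τ < nb (t*2) / nb t :=
    (hrv 2 two_pos).eventually_const_lt (by nlinarith : τ < (2:ℝ)^(-α))
  have hhalf : Tendsto (fun t : ℝ => nb (t * (1/2)) / nb t) atTop (𝓝 ((2:ℝ)^α)) := by
    have h := hrv (1/2) (by norm_num)
    have hval : ((1:ℝ)/2) ^ (-α) = (2:ℝ)^α := by
      rw [one_div, Real.inv_rpow two_pos.le, Real.rpow_neg two_pos.le, inv_inv]
    rwa [hval] at h
  have e3 : ∀ᶠ t in atTop, nb (t * (1/2)) / nb t < σ :=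
    hhalf.eventually_lt_const (by nlinarith : (2:ℝ)^α < σ)
  obtain ⟨T₀, hT₀⟩ := eventually_atTop.mp ((e1.and e2).and e3)
  set T₁ : ℝ := max T₀ 1 with hT₁def
  have hT₁1 : 1 ≤ T₁ := le_max_right _ _
  have hT₁0 : 0 < T₁ := lt_of_lt_of_le one_pos hT₁1
  have hup : ∀ t, T₁ ≤ t → nb (2*t) ≤ ρ * nb t := by
    intro t ht
    have hpt := hT₀ t (le_trans (le_max_left _ _) ht)
    have ht0 : 0 < t := lt_of_lt_of_le hT₁0 ht
    have hnbt : 0 < nb t := hnbpos t ht0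
    have h := hpt.1.1
    rw [div_lt_iff₀ hnbt] at h
    calc nb (2*t) = nb (t*2) := by rw [mul_comm]
      _ ≤ ρ * nb t := h.le
  have hlow : ∀ t, T₁ ≤ t → τ * nb t ≤ nb (2*t) := by
    intro t ht
    have hpt := hT₀ t (le_trans (le_max_left _ _) ht)
    have ht0 : 0 < t := lt_of_lt_of_le hT₁0 ht
    have hnbt : 0 < nb t := hnbpos t ht0
    have h := hpt.1.2
    rw [lt_div_iff₀ hnbt] at h
    calc τ * nb t ≤ nb (t*2) := h.le
      _ = nb (2*t) := by rw [mul_comm]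
  have hdown : ∀ t, T₁ ≤ t → nb (t/2) ≤ σ * nb t := by
    intro t ht
    have hpt := hT₀ t (le_trans (le_max_left _ _) ht)
    have ht0 : 0 < t := lt_of_lt_of_le hT₁0 ht
    have hnbt : 0 < nb t := hnbpos t ht0
    have h := hpt.2
    rw [div_lt_iff₀ hnbt] at h
    calc nb (t/2) = nb (t*(1/2)) := by rw [mul_one_div]
      _ ≤ σ * nb t := h.le
  set c : ℝ := 2 * T₁ with hcdef
  have hc0 : (0:ℝ) < c := by rw [hcdef]; linarith
  set y₀ : ℝ := 1 / (2*T₁) with hy₀def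
  have hy₀pos : 0 < y₀ := by rw [hy₀def]; positivity
  set B : ℝ → ℝ := fun v =>
    if v ≤ 1 then σ * v ^ (1 - Real.logb 2 σ) else ρ⁻¹ * v ^ Real.logb 2 ρ with hBdef
  have hBnn : ∀ v : ℝ, 0 < v → 0 ≤ B v := by
    intro v hv; rw [hBdef]; dsimp only; split
    · exact mul_nonneg (by linarith) (Real.rpow_nonneg hv.le _)
    · exact mul_nonneg (inv_nonneg.mpr hρ0.le) (Real.rpow_nonneg hv.le _)
  have hBint : IntegrableOn B (Ioi (0:ℝ)) := by
    rw [← Ioc_union_Ioi_eq_Ioi (zero_le_one : (0:ℝ) ≤ 1), integrableOn_union]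
    constructor
    · have hbase : IntegrableOn (fun v : ℝ => σ * v ^ (1 - Real.logb 2 σ)) (Ioc 0 1) := by
        apply Integrable.const_mul
        have h := intervalIntegral.intervalIntegrable_rpow'
          (a:=0) (b:=1) (r:=1 - Real.logb 2 σ) (by linarith)
        rwa [intervalIntegrable_iff_integrableOn_Ioc_of_le zero_le_one] at h
      refine hbase.congr_fun (fun v hv => ?_) measurableSet_Ioc
      rw [hBdef]; dsimp only; rw [if_pos hv.2]
    · have hbase : IntegrableOn (fun v : ℝ => ρ⁻¹ * v ^ Real.logb 2 ρ) (Ioi 1) :=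
        (integrableOn_Ioi_rpow_of_lt hLρlt one_pos).const_mul _
      refine hbase.congr_fun (fun v hv => ?_) measurableSet_Ioi
      rw [hBdef]; dsimp only; rw [if_neg (not_le.mpr hv)]
  have hyT : ∀ y : ℝ, y ∈ Ioo (0:ℝ) y₀ → T₁ ≤ 1/y := by
    intro y hy
    have hy0 : 0 < y := hy.1
    rw [le_div_iff₀ hy0]
    have h2 := hy.2
    rw [hy₀def, lt_div_iff₀ (by positivity)] at h2
    have h3 : y * (2*T₁) = 2*(T₁*y) := by ring
    linarith
  have hGbound : ∀ y : ℝ, y ∈ Ioo (0:ℝ) y₀ → ∀ v : ℝ, c * y < v →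
      (1 - Real.exp (-v)) * nb (v/y) ≤ B v * nb (1/y) := by
    intro y hy v hv
    have hy0 : 0 < y := hy.1
    have hv0 : 0 < v := lt_trans (by positivity) hv
    rw [hBdef]; dsimp only
    by_cases h1 : v ≤ 1
    · rw [if_pos h1]
      have hp := potter_down hT₁1 hσ1 hnbnn hmono hdown hy0 hv0 h1
        (by rw [hcdef] at hv; linarith)
      calc (1 - Real.exp (-v)) * nb (v/y)
          ≤ v * (σ * v ^ (-Real.logb 2 σ) * nb (1/y)) :=
            mul_le_mul one_sub_exp_le hp (hnbnn _) hv0.le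
        _ = (σ * v ^ (1 - Real.logb 2 σ)) * nb (1/y) := by
            rw [show (1:ℝ) - Real.logb 2 σ = 1 + (-Real.logb 2 σ) by ring,
              Real.rpow_add hv0, Real.rpow_one]
            ring
    · push_neg at h1
      rw [if_neg (not_le.mpr h1)]
      have hp := potter_up hT₁1 hρ0 hρ1.le hnbnn hmono hup hy0 (hyT y hy) h1.le
      calc (1 - Real.exp (-v)) * nb (v/y)
          ≤ 1 * (ρ⁻¹ * v ^ Real.logb 2 ρ * nb (1/y)) :=
            mul_le_mul one_sub_exp_le_one hp (hnbnn _) one_pos.le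
        _ = (ρ⁻¹ * v ^ Real.logb 2 ρ) * nb (1/y) := by ring
  have hsmall : ∀ y : ℝ, 0 < y → ∀ v : ℝ, 0 < v →
      (1 - Real.exp (-v)) * nb (v/y) ≤ M * y := by
    intro y hy v hv
    have h1 : (v/y) * nb (v/y) ≤ M := hmarkov _ (by positivity)
    have h2 : v * nb (v/y) ≤ M * y := by
      rw [div_mul_eq_mul_div, div_le_iff₀ hy] at h1
      linarith
    calc (1 - Real.exp (-v)) * nb (v/y) ≤ v * nb (v/y) :=
          mul_le_mul_of_nonneg_right one_sub_exp_le (hnbnn _)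
      _ ≤ M * y := h2
  have hgmeas : ∀ y : ℝ, Measurable (fun v : ℝ => (1 - Real.exp (-v)) * nb (v/y)) := by
    intro y
    exact (measurable_const.sub (Real.measurable_exp.comp measurable_neg)).mul
      (hnbmeas.comp (measurable_id.div_const y))
  set F : ℝ → ℝ → ℝ := fun y => (Set.Ioi (c*y)).indicator
      (fun w => (1 - Real.exp (-w)) * nb (w/y) / nb (1/y)) with hFdef
  have hmem : Ioo (0:ℝ) y₀ ∈ 𝓝[>] (0:ℝ) :=
    Ioo_mem_nhdsGT_of_mem ⟨le_rfl, hy₀pos⟩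
  have hCeq : (∫ v in Ioi (0:ℝ), (1 - Real.exp (-v)) * v ^ (-α)) = C := by
    rw [hCdef]; exact gamma_integral_aux α hα1 hα2
  have htend1 : Tendsto (fun y => ∫ v in Ioi (0:ℝ), F y v) (𝓝[>] (0:ℝ)) (𝓝 C) := by
    rw [← hCeq]
    apply tendsto_integral_filter_of_dominated_convergence B
    · apply Eventually.of_forall
      intro y
      apply Measurable.aestronglyMeasurable
      rw [hFdef]
      exact (((hgmeas y).div_const _)).indicator measurableSet_Ioi
    · filter_upwards [hmem] with y hy
      rw [ae_restrict_iff' measurableSet_Ioi]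
      apply ae_of_all
      intro v hv
      have hv0 : (0:ℝ) < v := hv
      have hy0 : 0 < y := hy.1
      have hnb1y : 0 < nb (1/y) := hnbpos _ (by positivity)
      by_cases hmem2 : v ∈ Set.Ioi (c*y)
      · rw [hFdef]; dsimp only
        rw [indicator_of_mem hmem2]
        rw [Real.norm_eq_abs, abs_of_nonneg (div_nonneg
          (mul_nonneg (one_sub_exp_nonneg hv0.le) (hnbnn _)) (hnbnn _))]
        rw [div_le_iff₀ hnb1y]
        exact hGbound y hy v hmem2
      · rw [hFdef]; dsimp only
        rw [indicator_of_notMem hmem2, norm_zero]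
        exact hBnn v hv0
    · exact hBint
    · rw [ae_restrict_iff' measurableSet_Ioi]
      apply ae_of_all
      intro v hv
      have hv0 : (0:ℝ) < v := hv
      have hr := (hrv v hv0).comp tendsto_inv_nhdsGT_zero
      have hr2 := hr.const_mul (1 - Real.exp (-v))
      apply hr2.congr'
      filter_upwards [Ioo_mem_nhdsGT_of_mem
        (show (0:ℝ) ∈ Ico 0 (v/c) from ⟨le_rfl, by positivity⟩)] with y hy
      have hy0 : 0 < y := hy.1
      have hcyv : c * y < v := by
        have h2 := hy.2
        rw [lt_div_iff₀ hc0] at h2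
        linarith
      rw [hFdef]; dsimp only
      rw [indicator_of_mem (show v ∈ Set.Ioi (c*y) from hcyv)]
      show (1 - Real.exp (-v)) * (nb (y⁻¹ * v) / nb y⁻¹) = _
      rw [inv_mul_eq_div, mul_div_assoc, one_div]
  have hysq : Tendsto (fun y : ℝ => y^2 / nb (1/y)) (𝓝[>] (0:ℝ)) (𝓝 0) := by
    have hts := tsq_tendsto hT₁1 hτ0 h4τ (hnbpos T₁ hT₁0) hmono
      (geom_chain_low' hT₁1 hτ0.le hlow)
    have h2 := (hts.comp tendsto_inv_nhdsGT_zero).inv_tendsto_atTop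
    apply h2.congr'
    filter_upwards [self_mem_nhdsWithin] with y hy
    have hy0 : (0:ℝ) < y := hy
    show ((y⁻¹)^2 * nb (y⁻¹))⁻¹ = y^2 / nb (1/y)
    rw [mul_inv, ← inv_pow, inv_inv, one_div, div_eq_mul_inv]
  set I2 : ℝ → ℝ := fun y =>
    (∫ v in Ioc (0:ℝ) (c*y), (1 - Real.exp (-v)) * nb (v/y)) / nb (1/y) with hI2def
  have hI2int : ∀ y : ℝ, 0 < y →
      IntegrableOn (fun v : ℝ => (1 - Real.exp (-v)) * nb (v/y)) (Ioc 0 (c*y)) := by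
    intro y hy
    apply Measure.integrableOn_of_bounded (M := M * y)
    · exact measure_Ioc_lt_top.ne
    · exact (hgmeas y).aestronglyMeasurable
    · rw [ae_restrict_iff' measurableSet_Ioc]
      apply ae_of_all
      intro v hv
      rw [Real.norm_eq_abs, abs_of_nonneg
        (mul_nonneg (one_sub_exp_nonneg hv.1.le) (hnbnn _))]
      exact hsmall y hy v hv.1
  have htend2 : Tendsto I2 (𝓝[>] (0:ℝ)) (𝓝 0) := by
    apply squeeze_zero_norm' (a := fun y => (M * c) * (y^2 / nb (1/y)))
    · filter_upwards [hmem] with y hy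
      have hy0 : 0 < y := hy.1
      have hnb1y : 0 < nb (1/y) := hnbpos _ (by positivity)
      have hnorm : ‖∫ v in Ioc (0:ℝ) (c*y), (1 - Real.exp (-v)) * nb (v/y)‖
          ≤ (M*y) * (volume (Ioc (0:ℝ) (c*y))).toReal := by
        apply norm_setIntegral_le_of_norm_le_const measure_Ioc_lt_top
        · intro v hv
          rw [Real.norm_eq_abs, abs_of_nonneg
            (mul_nonneg (one_sub_exp_nonneg hv.1.le) (hnbnn _))]
          exact hsmall y hy0 v hv.1
      have hvol : (volume (Ioc (0:ℝ) (c*y))).toReal = c*y := by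
        rw [Real.volume_Ioc, ENNReal.toReal_ofReal (by simp only [sub_zero]; positivity)]
        ring
      rw [hvol] at hnorm
      rw [hI2def]; dsimp only
      rw [norm_div, Real.norm_eq_abs (nb (1/y)), abs_of_nonneg (hnbnn _)]
      calc ‖∫ v in Ioc (0:ℝ) (c*y), (1 - Real.exp (-v)) * nb (v/y)‖ / nb (1/y)
          ≤ ((M*y) * (c*y)) / nb (1/y) := by gcongr
        _ = (M*c) * (y^2 / nb (1/y)) := by ring
    · simpa using hysq.const_mul (M*c)
  have hkey : ∀ᶠ y in 𝓝[>] (0:ℝ),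
      (∫ u in Set.Ioi (0:ℝ), (1 - Real.exp (-(y * u))) * nb u) / (C * y⁻¹ * nb (1/y))
        = ((∫ v in Ioi (0:ℝ), F y v) + I2 y) / C := by
    filter_upwards [hmem] with y hy
    have hy0 : 0 < y := hy.1
    have hnb1y : 0 < nb (1/y) := hnbpos _ (by positivity)
    have hchg : (∫ u in Set.Ioi (0:ℝ), (1 - Real.exp (-(y * u))) * nb u)
        = y⁻¹ * ∫ v in Ioi (0:ℝ), (1 - Real.exp (-v)) * nb (v/y) := by
      have h := integral_comp_mul_left_Ioi
        (fun v => (1 - Real.exp (-v)) * nb (v/y)) 0 hy0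
      rw [mul_zero, smul_eq_mul] at h
      rw [← h]
      refine setIntegral_congr_fun measurableSet_Ioi (fun x _ => ?_)
      rw [mul_div_cancel_left₀ _ hy0.ne']
    have hI1int : IntegrableOn (fun v : ℝ => (1 - Real.exp (-v)) * nb (v/y))
        (Ioi (c*y)) := by
      refine Integrable.mono' (g := fun v => B v * nb (1/y))
        ((hBint.mono_set (Ioi_subset_Ioi (by positivity))).mul_const _)
        ((hgmeas y).aestronglyMeasurable) ?_
      rw [ae_restrict_iff' measurableSet_Ioi]
      apply ae_of_all
      intro v hv
      have hv0 : 0 < v := lt_trans (by positivity) hv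
      rw [Real.norm_eq_abs, abs_of_nonneg
        (mul_nonneg (one_sub_exp_nonneg hv0.le) (hnbnn _))]
      exact hGbound y hy v hv
    have hsplit : (∫ v in Ioi (0:ℝ), (1 - Real.exp (-v)) * nb (v/y))
        = (∫ v in Ioc (0:ℝ) (c*y), (1 - Real.exp (-v)) * nb (v/y))
          + ∫ v in Ioi (c*y), (1 - Real.exp (-v)) * nb (v/y) := by
      rw [← setIntegral_union (Ioc_disjoint_Ioi le_rfl) measurableSet_Ioi
        (hI2int y hy0) hI1int, Ioc_union_Ioi_eq_Ioi (by positivity : (0:ℝ) ≤ c*y)]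
    have hFint : (∫ v in Ioi (0:ℝ), F y v)
        = (∫ v in Ioi (c*y), (1 - Real.exp (-v)) * nb (v/y)) / nb (1/y) := by
      rw [hFdef]; dsimp only
      rw [integral_indicator measurableSet_Ioi,
        Measure.restrict_restrict measurableSet_Ioi, Ioi_inter_Ioi,
        sup_of_le_left (by positivity : (0:ℝ) ≤ c*y), integral_div]
    rw [hchg, hsplit, hFint, hI2def]
    field_simp
    ring
  have hfinal := (htend1.add htend2).div_const C
  rw [add_zero, div_self hC0.ne'] at hfinal
  exact Filter.Tendsto.congr' (EventuallyEq.symm hkey) hfinal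
end

section
/- If ν has finite second moment m₂ = ∫_0^∞ l² ν(dl) < ∞, then for every y ≥ 0, lim_{t→(1/m)⁻} (1−mt)^{−2} Ψ^{(t)}((1−mt) y) = −y − (m₂/m) y²/2. -/
open MeasureTheory Filter

/-- The Laplace exponent `Ψ^(t)(ρ) = -ρ + t ∫_0^∞ (1 - e^{-ρ l}) ν(dl)`. -/
noncomputable def Psi (ν : Measure ℝ) (t ρ : ℝ) : ℝ :=
  -ρ + t * ∫ l, (1 - Real.exp (-(ρ * l))) ∂ν

/-- Quadratic upper bound for `exp (-x)` when `x ≥ 0`. -/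
lemma aux_exp_quad {x : ℝ} (hx : 0 ≤ x) : Real.exp (-x) - 1 + x ≤ x ^ 2 / 2 := by
  have key : ∀ z : ℝ, HasDerivAt (fun z : ℝ => z ^ 2 / 2 + 1 - z - Real.exp (-z))
      (z - 1 + Real.exp (-z)) z := by
    intro z
    have h1 : HasDerivAt (fun z : ℝ => Real.exp (-z)) (-Real.exp (-z)) z := by
      simpa [Function.comp_def] using (Real.hasDerivAt_exp (-z)).comp z (hasDerivAt_neg z)
    have h2 : HasDerivAt (fun z : ℝ => z ^ 2 / 2 + 1 - z) (z - 1) z := by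
      have := (((hasDerivAt_pow 2 z).div_const 2).add_const 1).sub (hasDerivAt_id z)
      simpa [Pi.sub_def] using this
    have := h2.sub h1
    exact this.congr_deriv (by ring)
  have mono : Monotone (fun z : ℝ => z ^ 2 / 2 + 1 - z - Real.exp (-z)) := by
    apply monotone_of_deriv_nonneg
    · exact fun z => (key z).differentiableAt
    · intro z
      rw [(key z).deriv]
      have := Real.add_one_le_exp (-z)
      linarith
  have h0 := mono hx
  simp only [Real.exp_zero] at h0
  norm_num at h0
  linarith

/-- Pointwise second-order limit. -/
lemma aux_lim (c : ℝ) (hc : 0 ≤ c) :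
    Tendsto (fun ε : ℝ => (ε ^ 2)⁻¹ * (Real.exp (-(ε * c)) - 1 + ε * c))
      (nhdsWithin 0 (Set.Ioi 0)) (nhds (c ^ 2 / 2)) := by
  have h0 : Tendsto (fun ε : ℝ => (ε ^ 2)⁻¹ * (Real.exp (-(ε * c)) - 1 + ε * c) - c ^ 2 / 2)
      (nhdsWithin 0 (Set.Ioi 0)) (nhds 0) := by
    refine squeeze_zero_norm' (a := fun ε : ℝ => 2 / 9 * c ^ 3 * ε) ?_ ?_
    · have hev1 : ∀ᶠ ε in nhdsWithin (0:ℝ) (Set.Ioi 0), ε ∈ Set.Ioi (0:ℝ) :=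
        eventually_mem_nhdsWithin
      have hev2 : ∀ᶠ ε in nhdsWithin (0:ℝ) (Set.Ioi 0), ε * c ≤ 1 := by
        have hcont : Tendsto (fun ε : ℝ => ε * c) (nhds 0) (nhds 0) := by
          exact (continuous_id.mul continuous_const).tendsto' (0:ℝ) 0 (by simp)
        exact (hcont.eventually (eventually_le_nhds (by norm_num))).filter_mono
          nhdsWithin_le_nhds
      filter_upwards [hev1, hev2] with ε hε hεc
      have hε0 : (0:ℝ) < ε := hε
      have hεc0 : 0 ≤ ε * c := mul_nonneg hε0.le hc
      have hx : |(-(ε * c))| ≤ 1 := by rwa [abs_neg, abs_of_nonneg hεc0]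
      have hb := Real.exp_bound hx (n := 3) (by norm_num)
      have hsum : ∑ i ∈ Finset.range 3, (-(ε * c)) ^ i / (Nat.factorial i) =
          1 - ε * c + (ε * c) ^ 2 / 2 := by
        simp [Finset.sum_range_succ, Nat.factorial]
        try ring
      rw [hsum] at hb
      have habs : |(-(ε * c))| = ε * c := by rw [abs_neg, abs_of_nonneg hεc0]
      rw [habs] at hb
      have hb' : |Real.exp (-(ε * c)) - 1 + ε * c - (ε * c) ^ 2 / 2| ≤
          (ε * c) ^ 3 * (2 / 9) := by
        have : ((3:ℕ).succ : ℝ) / ((Nat.factorial 3 : ℝ) * 3) = 2 / 9 := by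
          norm_num [Nat.factorial]
        calc |Real.exp (-(ε * c)) - 1 + ε * c - (ε * c) ^ 2 / 2|
            = |Real.exp (-(ε * c)) - (1 - ε * c + (ε * c) ^ 2 / 2)| := by ring_nf
          _ ≤ (ε * c) ^ 3 * (2 / 9) := by rw [← this]; exact hb
      have hrw : (ε ^ 2)⁻¹ * (Real.exp (-(ε * c)) - 1 + ε * c) - c ^ 2 / 2 =
          (ε ^ 2)⁻¹ * (Real.exp (-(ε * c)) - 1 + ε * c - (ε * c) ^ 2 / 2) := by
        field_simp
      rw [Real.norm_eq_abs, hrw, abs_mul, abs_of_nonneg (by positivity : (0:ℝ) ≤ (ε ^ 2)⁻¹)]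
      calc (ε ^ 2)⁻¹ * |Real.exp (-(ε * c)) - 1 + ε * c - (ε * c) ^ 2 / 2|
          ≤ (ε ^ 2)⁻¹ * ((ε * c) ^ 3 * (2 / 9)) := by
            exact mul_le_mul_of_nonneg_left hb' (by positivity)
        _ = 2 / 9 * c ^ 3 * ε := by field_simp
    · have : Tendsto (fun ε : ℝ => 2 / 9 * c ^ 3 * ε) (nhds 0) (nhds 0) := by
        exact (continuous_const.mul continuous_id).tendsto' (0:ℝ) 0 (by simp)
      exact this.mono_left nhdsWithin_le_nhds
  have h1 := h0.add (tendsto_const_nhds (x := c ^ 2 / 2))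
  simpa using h1

/-- If `ν` (a measure on `(0,∞)` with finite positive mean `m`) has finite second
moment `m₂`, then for every `y ≥ 0`,
`lim_{t→(1/m)⁻} (1-mt)⁻² Ψ^(t)((1-mt) y) = -y - (m₂/m) y²/2`. -/
theorem Psi_rescaled_limit_finite_second_moment
    (ν : Measure ℝ) (hν0 : ν (Set.Iic 0) = 0)
    (hint : Integrable (fun l : ℝ => l) ν)
    (m : ℝ) (hm : m = ∫ l, l ∂ν) (hmpos : 0 < m)
    (hint2 : Integrable (fun l : ℝ => l ^ 2) ν)
    (m2 : ℝ) (hm2 : m2 = ∫ l, l ^ 2 ∂ν)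
    (y : ℝ) (hy : 0 ≤ y) :
    Tendsto (fun t : ℝ => ((1 - m * t) ^ 2)⁻¹ * Psi ν t ((1 - m * t) * y))
      (nhdsWithin (1 / m) (Set.Iio (1 / m)))
      (nhds (-y - (m2 / m) * y ^ 2 / 2)) := by
  have hm0 : m ≠ 0 := hmpos.ne'
  -- a.e. positivity
  have haepos : ∀ᵐ l ∂ν, 0 < l := by
    rw [ae_iff]
    refine measure_mono_null (fun l hl => ?_) hν0
    simpa using hl
  -- integrability of the remainder term
  have hgint : ∀ ρ : ℝ, 0 ≤ ρ →
      Integrable (fun l => Real.exp (-(ρ * l)) - 1 + ρ * l) ν := by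
    intro ρ hρ
    refine Integrable.mono' (hint2.const_mul (ρ ^ 2 / 2)) ?_ ?_
    · exact (((Real.continuous_exp.comp (continuous_const.mul continuous_id).neg).sub
        continuous_const).add (continuous_const.mul continuous_id)).aestronglyMeasurable
    · filter_upwards [haepos] with l hl
      have hx : 0 ≤ ρ * l := mul_nonneg hρ hl.le
      have h1 : 0 ≤ Real.exp (-(ρ * l)) - 1 + ρ * l := by
        have := Real.add_one_le_exp (-(ρ * l)); linarith
      have h2 : Real.exp (-(ρ * l)) - 1 + ρ * l ≤ (ρ * l) ^ 2 / 2 := aux_exp_quad hx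
      rw [Real.norm_eq_abs, abs_of_nonneg h1]
      calc Real.exp (-(ρ * l)) - 1 + ρ * l ≤ (ρ * l) ^ 2 / 2 := h2
        _ = ρ ^ 2 / 2 * l ^ 2 := by ring
  -- dominated convergence
  have hA' : Tendsto
      (fun ε : ℝ => ∫ l, (ε ^ 2)⁻¹ * (Real.exp (-(ε * y * l)) - 1 + ε * y * l) ∂ν)
      (nhdsWithin 0 (Set.Ioi 0)) (nhds (∫ l, y ^ 2 / 2 * l ^ 2 ∂ν)) := by
    refine tendsto_integral_filter_of_dominated_convergence
      (fun l => y ^ 2 / 2 * l ^ 2) ?_ ?_ (hint2.const_mul _) ?_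
    · filter_upwards with ε
      exact (continuous_const.mul (((Real.continuous_exp.comp
        (continuous_const.mul continuous_id).neg).sub
        continuous_const).add (continuous_const.mul continuous_id))).aestronglyMeasurable
    · filter_upwards [eventually_mem_nhdsWithin] with ε hε
      have hε0 : (0:ℝ) < ε := hε
      filter_upwards [haepos] with l hl
      have hx : 0 ≤ ε * y * l := mul_nonneg (mul_nonneg hε0.le hy) hl.le
      have h1 : 0 ≤ Real.exp (-(ε * y * l)) - 1 + ε * y * l := by
        have := Real.add_one_le_exp (-(ε * y * l)); linarith
      have h2 := aux_exp_quad hx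
      rw [Real.norm_eq_abs, abs_mul, abs_of_nonneg h1,
        abs_of_nonneg (by positivity : (0:ℝ) ≤ (ε ^ 2)⁻¹)]
      have : (ε ^ 2)⁻¹ * (Real.exp (-(ε * y * l)) - 1 + ε * y * l) ≤
          (ε ^ 2)⁻¹ * ((ε * y * l) ^ 2 / 2) :=
        mul_le_mul_of_nonneg_left h2 (by positivity)
      calc (ε ^ 2)⁻¹ * (Real.exp (-(ε * y * l)) - 1 + ε * y * l)
          ≤ (ε ^ 2)⁻¹ * ((ε * y * l) ^ 2 / 2) := this
        _ = y ^ 2 / 2 * l ^ 2 := by field_simp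
    · filter_upwards [haepos] with l hl
      have h := aux_lim (y * l) (mul_nonneg hy hl.le)
      have heq : (y * l) ^ 2 / 2 = y ^ 2 / 2 * l ^ 2 := by ring
      rw [heq] at h
      refine h.congr fun ε => ?_
      ring_nf
  have hA : Tendsto
      (fun ε : ℝ => (ε ^ 2)⁻¹ * ∫ l, (Real.exp (-(ε * y * l)) - 1 + ε * y * l) ∂ν)
      (nhdsWithin 0 (Set.Ioi 0)) (nhds (y ^ 2 / 2 * m2)) := by
    have heq : ∀ ε : ℝ,
        ∫ l, (ε ^ 2)⁻¹ * (Real.exp (-(ε * y * l)) - 1 + ε * y * l) ∂ν =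
        (ε ^ 2)⁻¹ * ∫ l, (Real.exp (-(ε * y * l)) - 1 + ε * y * l) ∂ν := fun ε =>
      integral_const_mul _ _
    have hval : ∫ l, y ^ 2 / 2 * l ^ 2 ∂ν = y ^ 2 / 2 * m2 := by
      rw [integral_const_mul, ← hm2]
    rw [← hval]
    exact hA'.congr heq
  -- the map t ↦ 1 - m t
  have hφ : Tendsto (fun t : ℝ => 1 - m * t) (nhdsWithin (1 / m) (Set.Iio (1 / m)))
      (nhdsWithin 0 (Set.Ioi 0)) := by
    refine tendsto_nhdsWithin_of_tendsto_nhds_of_eventually_within _ ?_ ?_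
    · have : Tendsto (fun t : ℝ => 1 - m * t) (nhds (1 / m)) (nhds (1 - m * (1 / m))) :=
        (continuous_const.sub (continuous_const.mul continuous_id)).tendsto _
      have h1 : 1 - m * (1 / m) = 0 := by field_simp; simp
      rw [h1] at this
      exact this.mono_left nhdsWithin_le_nhds
    · filter_upwards [eventually_mem_nhdsWithin] with t ht
      have : m * t < 1 := by
        have := (lt_div_iff₀' hmpos).mp (show t < 1 / m from ht)
        linarith [mul_comm m t]
      simpa [Set.mem_Ioi] using by linarith
  have ht : Tendsto (fun t : ℝ => t) (nhdsWithin (1 / m) (Set.Iio (1 / m))) (nhds (1 / m)) :=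
    tendsto_id.mono_left nhdsWithin_le_nhds
  have hcomb : Tendsto
      (fun t : ℝ => -y - t * (((1 - m * t) ^ 2)⁻¹ *
        ∫ l, (Real.exp (-((1 - m * t) * y * l)) - 1 + (1 - m * t) * y * l) ∂ν))
      (nhdsWithin (1 / m) (Set.Iio (1 / m)))
      (nhds (-y - 1 / m * (y ^ 2 / 2 * m2))) :=
    tendsto_const_nhds.sub (ht.mul (hA.comp hφ))
  have hval : -y - 1 / m * (y ^ 2 / 2 * m2) = -y - (m2 / m) * y ^ 2 / 2 := by ring
  rw [hval] at hcomb
  refine hcomb.congr' ?_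
  filter_upwards [eventually_mem_nhdsWithin] with t ht'
  have hmt : m * t < 1 := by
    have := (lt_div_iff₀' hmpos).mp (show t < 1 / m from ht')
    linarith [mul_comm m t]
  have hε : (0:ℝ) < 1 - m * t := by linarith
  have hεne : (1 - m * t) ≠ 0 := hε.ne'
  -- split the integral in Psi
  have hsplit : ∫ l, (1 - Real.exp (-((1 - m * t) * y * l))) ∂ν =
      (1 - m * t) * y * m -
        ∫ l, (Real.exp (-((1 - m * t) * y * l)) - 1 + (1 - m * t) * y * l) ∂ν := by
    have h1 : Integrable (fun l : ℝ => (1 - m * t) * y * l) ν := hint.const_mul _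
    have h2 := hgint ((1 - m * t) * y) (mul_nonneg hε.le hy)
    have hfun : (fun l : ℝ => 1 - Real.exp (-((1 - m * t) * y * l))) =
        fun l => (1 - m * t) * y * l -
          (Real.exp (-((1 - m * t) * y * l)) - 1 + (1 - m * t) * y * l) := by
      funext l; ring
    rw [hfun, integral_sub h1 h2]
    congr 1
    rw [hm, integral_const_mul]
  rw [Psi, hsplit]
  field_simp
  have hεne' : (1 - t * m) ≠ 0 := by rw [mul_comm]; exact hεne
  field_simp
  ring
end

section
/- Let α ∈ (1,2) and C > 0, and assume ν̄(x) ~ C x^{−α} as x → ∞. Then for every y ≥ 0, lim_{t→(1/m)⁻} (1−mt)^{−α/(α−1)} Ψ^{(t)}((1−mt)^{1/(α−1)} y) = −y − (C Γ(2−α)/(m(α−1))) y^α. -/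
open MeasureTheory Filter

section Aux
open Set Real
open scoped ENNReal

lemma aux_int_one_sub_exp {α : ℝ} (hα1 : 1 < α) (hα2 : α < 2) :
    IntegrableOn (fun u : ℝ => (1 - Real.exp (-u)) * u ^ (-α)) (Set.Ioi (0:ℝ)) := by
  have hmeas : Measurable (fun u : ℝ => (1 - Real.exp (-u)) * u ^ (-α)) := by fun_prop
  have h1 : IntegrableOn (fun u : ℝ => (1 - Real.exp (-u)) * u ^ (-α)) (Set.Ioc 0 1) := by
    have hb : IntegrableOn (fun u : ℝ => u ^ (1 - α)) (Set.Ioc (0:ℝ) 1) := by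
      have := intervalIntegral.intervalIntegrable_rpow' (r := 1 - α) (a := 0) (b := 1)
        (by linarith)
      rwa [intervalIntegrable_iff_integrableOn_Ioc_of_le (by norm_num)] at this
    refine hb.mono' hmeas.aestronglyMeasurable.restrict ?_
    refine (ae_restrict_iff' measurableSet_Ioc).2 (ae_of_all _ ?_)
    intro u hu
    have hu0 : 0 < u := hu.1
    have he1 : Real.exp (-u) ≤ 1 := by
      rw [Real.exp_le_one_iff]; linarith
    have he2 : 1 - Real.exp (-u) ≤ u := by
      have := Real.add_one_le_exp (-u); linarith
    have hnn : 0 ≤ (1 - Real.exp (-u)) * u ^ (-α) :=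
      mul_nonneg (by linarith) (Real.rpow_nonneg hu0.le _)
    rw [Real.norm_eq_abs, abs_of_nonneg hnn]
    calc (1 - Real.exp (-u)) * u ^ (-α) ≤ u * u ^ (-α) :=
          mul_le_mul_of_nonneg_right he2 (Real.rpow_nonneg hu0.le _)
      _ = u ^ (1 - α) := by
          nth_rewrite 1 [← Real.rpow_one u]
          rw [← Real.rpow_add hu0]
          ring_nf
  have h2 : IntegrableOn (fun u : ℝ => (1 - Real.exp (-u)) * u ^ (-α)) (Set.Ioi 1) := by
    refine (integrableOn_Ioi_rpow_of_lt (by linarith : -α < -1) one_pos).mono'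
      hmeas.aestronglyMeasurable.restrict ?_
    refine (ae_restrict_iff' measurableSet_Ioi).2 (ae_of_all _ ?_)
    intro u hu
    have hu0 : (0:ℝ) < u := lt_trans one_pos hu
    have he1 : Real.exp (-u) ≤ 1 := by rw [Real.exp_le_one_iff]; linarith
    have hnn : 0 ≤ (1 - Real.exp (-u)) * u ^ (-α) :=
      mul_nonneg (by linarith) (Real.rpow_nonneg hu0.le _)
    rw [Real.norm_eq_abs, abs_of_nonneg hnn]
    calc (1 - Real.exp (-u)) * u ^ (-α) ≤ 1 * u ^ (-α) :=
          mul_le_mul_of_nonneg_right (by nlinarith [Real.exp_pos (-u)]) (Real.rpow_nonneg hu0.le _)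
      _ = u ^ (-α) := one_mul _
  have := h1.union h2
  rwa [Set.Ioc_union_Ioi_eq_Ioi (zero_le_one)] at this

lemma aux_gamma {α : ℝ} (hα1 : 1 < α) (hα2 : α < 2) :
    ∫ u in Set.Ioi (0:ℝ), (1 - Real.exp (-u)) * u ^ (-α)
      = Real.Gamma (2 - α) / (α - 1) := by
  set F : ℝ → ℝ := fun u => (1 - Real.exp (-u)) * u ^ (1 - α) with hF
  set f' : ℝ → ℝ := fun x =>
    Real.exp (-x) * x ^ (1 - α) + (1 - α) * ((1 - Real.exp (-x)) * x ^ (-α)) with hf'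
  have hderiv : ∀ x ∈ Set.Ioi (0:ℝ), HasDerivAt F (f' x) x := by
    intro x hx
    have h1 : HasDerivAt (fun u : ℝ => 1 - Real.exp (-u)) (Real.exp (-x)) x := by
      have h0 : HasDerivAt (fun u : ℝ => Real.exp (-u)) (Real.exp (-x) * (-1)) x :=
        (Real.hasDerivAt_exp (-x)).comp x (hasDerivAt_neg x)
      exact ((hasDerivAt_const x (1:ℝ)).sub h0).congr_deriv (by ring)
    have h2 : HasDerivAt (fun u : ℝ => u ^ (1 - α)) ((1 - α) * x ^ (1 - α - 1)) x :=
      Real.hasDerivAt_rpow_const (Or.inl (ne_of_gt hx))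
    have h := h1.mul h2
    refine h.congr_deriv ?_
    rw [show (1:ℝ) - α - 1 = -α by ring]
    ring
  have Gconv : IntegrableOn (fun x : ℝ => Real.exp (-x) * x ^ (1 - α)) (Set.Ioi 0) := by
    have := Real.GammaIntegral_convergent (s := 2 - α) (by linarith)
    simpa [show (2:ℝ) - α - 1 = 1 - α by ring] using this
  have Tint := aux_int_one_sub_exp hα1 hα2
  have f'int : IntegrableOn f' (Set.Ioi (0:ℝ)) := Gconv.add (Tint.const_mul (1 - α))
  have hcont : ContinuousWithinAt F (Set.Ici (0:ℝ)) 0 := by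
    have hF0 : F 0 = 0 := by
      simp [hF, Real.zero_rpow (show (1:ℝ) - α ≠ 0 by intro h; linarith [h])]
    rw [ContinuousWithinAt, hF0]
    have hg : Tendsto (fun u : ℝ => u ^ (2 - α)) (nhdsWithin 0 (Set.Ici 0)) (nhds 0) := by
      have hc := (Real.continuousAt_rpow_const 0 (2 - α) (Or.inr (by linarith))).continuousWithinAt
        (s := Set.Ici (0:ℝ))
      rw [ContinuousWithinAt, Real.zero_rpow (show (2:ℝ) - α ≠ 0 by intro h; linarith)] at hc
      exact hc
    refine squeeze_zero' ?_ ?_ hg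
    · filter_upwards [eventually_mem_nhdsWithin] with u hu
      have hu0 : (0:ℝ) ≤ u := hu
      have he1 : Real.exp (-u) ≤ 1 := by rw [Real.exp_le_one_iff]; linarith
      exact mul_nonneg (by linarith) (Real.rpow_nonneg hu0 _)
    · filter_upwards [eventually_mem_nhdsWithin] with u hu
      have hu0 : (0:ℝ) ≤ u := hu
      rcases eq_or_lt_of_le hu0 with h | h
      · simp [hF, ← h, Real.zero_rpow (show (1:ℝ) - α ≠ 0 by intro hh; linarith),
          Real.zero_rpow (show (2:ℝ) - α ≠ 0 by intro hh; linarith)]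
      · have he2 : 1 - Real.exp (-u) ≤ u := by
          have := Real.add_one_le_exp (-u); linarith
        calc F u ≤ u * u ^ (1 - α) :=
              mul_le_mul_of_nonneg_right he2 (Real.rpow_nonneg hu0 _)
          _ = u ^ (2 - α) := by
              nth_rewrite 1 [← Real.rpow_one u]
              rw [← Real.rpow_add h]; ring_nf
  have htop : Tendsto F atTop (nhds 0) := by
    have h1 : Tendsto (fun u : ℝ => 1 - Real.exp (-u)) atTop (nhds 1) := by
      simpa using tendsto_const_nhds.sub Real.tendsto_exp_neg_atTop_nhds_zero
    have h2 : Tendsto (fun u : ℝ => u ^ (1 - α)) atTop (nhds 0) := by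
      have := tendsto_rpow_neg_atTop (show (0:ℝ) < α - 1 by linarith)
      simpa [show -(α - 1) = 1 - α by ring] using this
    simpa using h1.mul h2
  have key : ∫ x in Set.Ioi (0:ℝ), f' x = 0 - F 0 :=
    integral_Ioi_of_hasDerivAt_of_tendsto hcont hderiv f'int htop
  have hF0 : F 0 = 0 := by
    simp [hF, Real.zero_rpow (show (1:ℝ) - α ≠ 0 by intro h; linarith)]
  rw [hF0, sub_zero] at key
  have hsplit : ∫ x in Set.Ioi (0:ℝ), f' x
      = (∫ x in Set.Ioi (0:ℝ), Real.exp (-x) * x ^ (1 - α))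
        + (1 - α) * ∫ x in Set.Ioi (0:ℝ), (1 - Real.exp (-x)) * x ^ (-α) := by
    rw [hf', integral_add Gconv (Tint.const_mul (1 - α)), integral_const_mul]
  have hGamma : Real.Gamma (2 - α) = ∫ x in Set.Ioi (0:ℝ), Real.exp (-x) * x ^ (1 - α) := by
    rw [Real.Gamma_eq_integral (by linarith : (0:ℝ) < 2 - α)]
    congr 1
    ext x
    rw [show (2:ℝ) - α - 1 = 1 - α by ring]
  rw [hsplit, ← hGamma] at key
  have hne : α - 1 ≠ 0 := by intro h; linarith
  field_simp
  linarith [key]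

lemma aux_ae_pos (ν : Measure ℝ) (hν0 : ν (Set.Iic 0) = 0) : ∀ᵐ l ∂ν, 0 < l := by
  rw [ae_iff]
  convert hν0 using 2
  ext l
  simp [not_lt]

lemma aux_int1 (ν : Measure ℝ) (hν0 : ν (Set.Iic 0) = 0)
    (hint : Integrable (fun l : ℝ => l) ν) {ρ : ℝ} (hρ : 0 ≤ ρ) :
    Integrable (fun l : ℝ => Real.exp (-(ρ * l)) - 1 + ρ * l) ν := by
  refine (hint.const_mul ρ).mono'
    ((by continuity : Continuous fun l : ℝ => Real.exp (-(ρ * l)) - 1 + ρ * l).aestronglyMeasurable) ?_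
  filter_upwards [aux_ae_pos ν hν0] with l hl
  have h1 := Real.add_one_le_exp (-(ρ * l))
  have h2 : Real.exp (-(ρ * l)) ≤ 1 := by
    rw [Real.exp_le_one_iff]
    nlinarith
  rw [Real.norm_eq_abs, abs_of_nonneg (by linarith)]
  linarith

lemma aux_int2 (ν : Measure ℝ) (hν0 : ν (Set.Iic 0) = 0)
    (hint : Integrable (fun l : ℝ => l) ν) {ρ : ℝ} (hρ : 0 ≤ ρ) :
    Integrable (fun l : ℝ => 1 - Real.exp (-(ρ * l))) ν := by
  refine (hint.const_mul ρ).mono'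
    ((by continuity : Continuous fun l : ℝ => 1 - Real.exp (-(ρ * l))).aestronglyMeasurable) ?_
  filter_upwards [aux_ae_pos ν hν0] with l hl
  have h1 := Real.add_one_le_exp (-(ρ * l))
  have h2 : Real.exp (-(ρ * l)) ≤ 1 := by
    rw [Real.exp_le_one_iff]
    nlinarith
  rw [Real.norm_eq_abs, abs_of_nonneg (by linarith)]
  linarith

lemma aux_repr (ν : Measure ℝ) (hν0 : ν (Set.Iic 0) = 0)
    (hint : Integrable (fun l : ℝ => l) ν)
    (hfin : ∀ x : ℝ, 0 < x → ν (Set.Ioi x) ≠ ⊤)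
    {ρ : ℝ} (hρ : 0 < ρ)
    (hRint : IntegrableOn
      (fun x : ℝ => (ρ * (1 - Real.exp (-(ρ * x)))) * (ν (Set.Ioi x)).toReal)
      (Set.Ioi 0)) :
    ∫ l, (Real.exp (-(ρ * l)) - 1 + ρ * l) ∂ν
      = ∫ x in Set.Ioi (0:ℝ), (ρ * (1 - Real.exp (-(ρ * x)))) * (ν (Set.Ioi x)).toReal := by
  have hpos := aux_ae_pos ν hν0
  have hnn : ∀ l : ℝ, 0 ≤ Real.exp (-(ρ * l)) - 1 + ρ * l := fun l => by
    have := Real.add_one_le_exp (-(ρ * l)); linarith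
  have hgnn : ∀ x : ℝ, 0 ≤ x → 0 ≤ ρ * (1 - Real.exp (-(ρ * x))) := by
    intro x hx
    have h2 : Real.exp (-(ρ * x)) ≤ 1 := by
      rw [Real.exp_le_one_iff]; nlinarith
    nlinarith
  -- the product kernel
  set S : Set (ℝ × ℝ) := {p : ℝ × ℝ | 0 < p.2 ∧ p.2 < p.1} with hS
  have hSmeas : MeasurableSet S := by
    apply MeasurableSet.inter
    · exact measurable_snd measurableSet_Ioi
    · exact measurableSet_lt measurable_snd measurable_fst
  set f : ℝ → ℝ → ℝ≥0∞ := fun l x =>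
    Set.indicator S (fun p => ENNReal.ofReal (ρ * (1 - Real.exp (-(ρ * p.2))))) (l, x) with hf
  have hfmeas : Measurable (fun p : ℝ × ℝ =>
      Set.indicator S (fun p => ENNReal.ofReal (ρ * (1 - Real.exp (-(ρ * p.2))))) p) := by
    refine Measurable.indicator ?_ hSmeas
    fun_prop
  -- inner FTC computation
  have inner : ∀ l : ℝ, 0 < l →
      (∫⁻ x, f l x) = ENNReal.ofReal (Real.exp (-(ρ * l)) - 1 + ρ * l) := by
    intro l hl
    have hind : (fun x => f l x)
        = Set.indicator (Set.Ioo 0 l) (fun x => ENNReal.ofReal (ρ * (1 - Real.exp (-(ρ * x))))) := by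
      ext x
      by_cases hx : x ∈ Set.Ioo 0 l
      · rw [Set.indicator_of_mem hx, hf]
        have : (l, x) ∈ S := ⟨hx.1, hx.2⟩
        simp [Set.indicator_of_mem this]
      · rw [Set.indicator_of_notMem hx, hf]
        have : (l, x) ∉ S := fun h => hx ⟨h.1, h.2⟩
        simp [Set.indicator_of_notMem this]
    rw [hind, lintegral_indicator measurableSet_Ioo]
    have hH : ∀ x ∈ Set.uIcc (0:ℝ) l,
        HasDerivAt (fun x : ℝ => ρ * x + Real.exp (-(ρ * x))) (ρ * (1 - Real.exp (-(ρ * x)))) x := by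
      intro x _
      have h0 : HasDerivAt (fun x : ℝ => -(ρ * x)) (-ρ) x := by
        exact ((hasDerivAt_id x).const_mul ρ).neg.congr_deriv (by ring)
      have h1 : HasDerivAt (fun x : ℝ => Real.exp (-(ρ * x))) (Real.exp (-(ρ * x)) * (-ρ)) x :=
        (Real.hasDerivAt_exp _).comp x h0
      have h2 : HasDerivAt (fun x : ℝ => ρ * x) ρ x := by
        simpa using (hasDerivAt_id x).const_mul ρ
      refine (h2.add h1).congr_deriv ?_
      ring
    have hcontI : IntervalIntegrable (fun x : ℝ => ρ * (1 - Real.exp (-(ρ * x)))) volume 0 l :=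
      Continuous.intervalIntegrable (by continuity) 0 l
    have hFTC := intervalIntegral.integral_eq_sub_of_hasDerivAt hH hcontI
    rw [intervalIntegral.integral_of_le hl.le] at hFTC
    have hIoo : ∫ x in Set.Ioo (0:ℝ) l, ρ * (1 - Real.exp (-(ρ * x)))
        = Real.exp (-(ρ * l)) - 1 + ρ * l := by
      rw [← integral_Ioc_eq_integral_Ioo, hFTC]
      simp [Real.exp_zero]
      ring
    rw [← hIoo]
    refine (ofReal_integral_eq_lintegral_ofReal ?_ ?_).symm
    · exact hcontI.1.mono_set Set.Ioo_subset_Ioc_self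
    · refine (ae_restrict_iff' measurableSet_Ioo).2 (ae_of_all _ ?_)
      intro x hx
      exact hgnn x hx.1.le
  -- ν is sigma-finite
  have hsf : SigmaFinite ν := by
    refine ⟨⟨⟨fun n => Set.Iic 0 ∪ Set.Ioi (1 / (n + 1) : ℝ), fun _ => trivial, ?_, ?_⟩⟩⟩
    · intro n
      refine lt_of_le_of_lt (measure_union_le _ _) ?_
      rw [hν0, zero_add]
      exact (hfin _ (by positivity)).lt_top
    · rw [Set.eq_univ_iff_forall]
      intro x
      rcases le_or_gt x 0 with hx | hx
      · exact Set.mem_iUnion.2 ⟨0, Or.inl hx⟩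
      · obtain ⟨n, hn⟩ := exists_nat_one_div_lt hx
        exact Set.mem_iUnion.2 ⟨n, Or.inr hn⟩
  -- swap
  have hswap : ∫⁻ l, (∫⁻ x, f l x) ∂ν = ∫⁻ x, (∫⁻ l, f l x ∂ν) := by
    haveI := hsf
    have hm : AEMeasurable (Function.uncurry fun (x l : ℝ) => f l x)
        ((volume : Measure ℝ).prod ν) :=
      ((hfmeas.comp measurable_swap).aemeasurable)
    exact (lintegral_lintegral_swap (μ := (volume : Measure ℝ)) (ν := ν) hm).symm
  -- compute inner integral after swap
  have hafter : ∀ x : ℝ, (∫⁻ l, f l x ∂ν)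
      = Set.indicator (Set.Ioi 0)
          (fun x => ENNReal.ofReal (ρ * (1 - Real.exp (-(ρ * x)))) * ν (Set.Ioi x)) x := by
    intro x
    by_cases hx : 0 < x
    · have hind : (fun l => f l x)
          = Set.indicator (Set.Ioi x)
              (fun _ => ENNReal.ofReal (ρ * (1 - Real.exp (-(ρ * x))))) := by
        ext l
        by_cases hlx : l ∈ Set.Ioi x
        · rw [Set.indicator_of_mem hlx, hf]
          have : (l, x) ∈ S := ⟨hx, hlx⟩
          simp [Set.indicator_of_mem this]
        · rw [Set.indicator_of_notMem hlx, hf]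
          have : (l, x) ∉ S := fun h => hlx h.2
          simp [Set.indicator_of_notMem this]
      rw [hind, lintegral_indicator measurableSet_Ioi, setLIntegral_const,
        Set.indicator_of_mem (Set.mem_Ioi.2 hx)]
    · have hind : (fun l => f l x) = fun _ => 0 := by
        ext l
        rw [hf]
        have : (l, x) ∉ S := fun h => hx h.1
        simp [Set.indicator_of_notMem this]
      rw [hind, lintegral_const, zero_mul,
        Set.indicator_of_notMem (fun h => hx (Set.mem_Ioi.1 h))]
  -- put everything together in ℝ≥0∞
  have key : ∫⁻ l, ENNReal.ofReal (Real.exp (-(ρ * l)) - 1 + ρ * l) ∂ν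
      = ∫⁻ x in Set.Ioi (0:ℝ),
          ENNReal.ofReal (ρ * (1 - Real.exp (-(ρ * x)))) * ν (Set.Ioi x) := by
    have h1 : ∫⁻ l, ENNReal.ofReal (Real.exp (-(ρ * l)) - 1 + ρ * l) ∂ν
        = ∫⁻ l, (∫⁻ x, f l x) ∂ν := by
      refine lintegral_congr_ae ?_
      filter_upwards [hpos] with l hl
      exact (inner l hl).symm
    rw [h1, hswap]
    have h2 : ∀ x : ℝ, (∫⁻ l, f l x ∂ν)
        = Set.indicator (Set.Ioi 0)
            (fun x => ENNReal.ofReal (ρ * (1 - Real.exp (-(ρ * x)))) * ν (Set.Ioi x)) x := hafter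
    rw [lintegral_congr h2, lintegral_indicator measurableSet_Ioi]
  -- convert both sides to real integrals
  have hL : ENNReal.ofReal (∫ l, (Real.exp (-(ρ * l)) - 1 + ρ * l) ∂ν)
      = ∫⁻ l, ENNReal.ofReal (Real.exp (-(ρ * l)) - 1 + ρ * l) ∂ν :=
    ofReal_integral_eq_lintegral_ofReal (aux_int1 ν hν0 hint hρ.le) (ae_of_all _ hnn)
  have hR : ENNReal.ofReal
        (∫ x in Set.Ioi (0:ℝ), (ρ * (1 - Real.exp (-(ρ * x)))) * (ν (Set.Ioi x)).toReal)
      = ∫⁻ x in Set.Ioi (0:ℝ),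
          ENNReal.ofReal (ρ * (1 - Real.exp (-(ρ * x)))) * ν (Set.Ioi x) := by
    rw [ofReal_integral_eq_lintegral_ofReal hRint ?_]
    · refine setLIntegral_congr_fun measurableSet_Ioi ?_
      intro x hx
      beta_reduce
      rw [ENNReal.ofReal_mul (hgnn x (Set.mem_Ioi.1 hx).le),
        ENNReal.ofReal_toReal (hfin x (Set.mem_Ioi.1 hx))]
    · refine (ae_restrict_iff' measurableSet_Ioi).2 (ae_of_all _ ?_)
      intro x hx
      exact mul_nonneg (hgnn x (Set.mem_Ioi.1 hx).le) ENNReal.toReal_nonneg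
  have lnn : 0 ≤ ∫ l, (Real.exp (-(ρ * l)) - 1 + ρ * l) ∂ν :=
    integral_nonneg hnn
  have rnn : 0 ≤ ∫ x in Set.Ioi (0:ℝ),
      (ρ * (1 - Real.exp (-(ρ * x)))) * (ν (Set.Ioi x)).toReal := by
    refine setIntegral_nonneg measurableSet_Ioi ?_
    intro x hx
    exact mul_nonneg (hgnn x (Set.mem_Ioi.1 hx).le) ENNReal.toReal_nonneg
  have := hL.trans (key.trans hR.symm)
  exact (ENNReal.ofReal_eq_ofReal_iff lnn rnn).1 this

lemma aux_markov (ν : Measure ℝ) (hν0 : ν (Set.Iic 0) = 0)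
    (hint : Integrable (fun l : ℝ => l) ν) {x : ℝ} (hx : 0 < x) :
    ν (Set.Ioi x) ≤ ENNReal.ofReal ((∫ l, l ∂ν) / x) := by
  have hpos := aux_ae_pos ν hν0
  have hl : ∫⁻ l, ENNReal.ofReal l ∂ν = ENNReal.ofReal (∫ l, l ∂ν) :=
    (ofReal_integral_eq_lintegral_ofReal hint (hpos.mono fun l hl => hl.le)).symm
  have h1 : ν (Set.Ioi x) ≤ ν {l : ℝ | ENNReal.ofReal x ≤ ENNReal.ofReal l} := by
    apply measure_mono
    intro l hl
    exact ENNReal.ofReal_le_ofReal (le_of_lt hl)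
  have h2 := meas_ge_le_lintegral_div (μ := ν) (f := fun l : ℝ => ENNReal.ofReal l)
    (ENNReal.measurable_ofReal.aemeasurable)
    (by simp [hx] : ENNReal.ofReal x ≠ 0) (ENNReal.ofReal_ne_top)
  refine h1.trans (h2.trans ?_)
  rw [hl, ENNReal.ofReal_div_of_pos hx]

lemma aux_K (ν : Measure ℝ) (hν0 : ν (Set.Iic 0) = 0)
    (hint : Integrable (fun l : ℝ => l) ν)
    {α C : ℝ} (hα1 : 1 < α) (hC : 0 < C)
    (htail : Tendsto (fun x : ℝ => x ^ α * (ν (Set.Ioi x)).toReal) atTop (nhds C)) :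
    ∃ K : ℝ, 0 < K ∧ ∀ x : ℝ, 0 < x → (ν (Set.Ioi x)).toReal ≤ K * x ^ (-α) := by
  have hmnn : 0 ≤ ∫ l, l ∂ν :=
    integral_nonneg_of_ae ((aux_ae_pos ν hν0).mono fun l hl => hl.le)
  set m := ∫ l, l ∂ν with hm
  have hbar : ∀ x : ℝ, 0 < x → (ν (Set.Ioi x)).toReal ≤ m / x := by
    intro x hx
    exact ENNReal.toReal_le_of_le_ofReal (div_nonneg hmnn hx.le) (aux_markov ν hν0 hint hx)
  obtain ⟨X, hX⟩ := (eventually_atTop).1 (htail.eventually (eventually_le_nhds (lt_add_one C)))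
  set X' : ℝ := max X 1 with hX'
  have hX'1 : (1:ℝ) ≤ X' := le_max_right _ _
  have hX'0 : (0:ℝ) < X' := lt_of_lt_of_le one_pos hX'1
  refine ⟨max (C + 1) (m * X' ^ (α - 1)) + 1, by positivity, ?_⟩
  intro x hx
  have hxa : (0:ℝ) < x ^ (-α) := Real.rpow_pos_of_pos hx _
  rcases le_or_gt X' x with h | h
  · have h1 : x ^ α * (ν (Set.Ioi x)).toReal ≤ C + 1 := hX x ((le_max_left _ _).trans h)
    have hxpow : (0:ℝ) < x ^ α := Real.rpow_pos_of_pos hx _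
    have : (ν (Set.Ioi x)).toReal ≤ (C + 1) * x ^ (-α) := by
      rw [Real.rpow_neg hx.le, ← div_eq_mul_inv, le_div_iff₀ hxpow]
      nlinarith [h1]
    refine this.trans ?_
    have : C + 1 ≤ max (C + 1) (m * X' ^ (α - 1)) + 1 := by
      have := le_max_left (C + 1) (m * X' ^ (α - 1)); linarith
    exact mul_le_mul_of_nonneg_right this hxa.le
  · have h1 : (ν (Set.Ioi x)).toReal ≤ m / x := hbar x hx
    have h2 : m / x ≤ m * X' ^ (α - 1) * x ^ (-α) := by
      rw [div_eq_mul_inv, ← Real.rpow_neg_one x]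
      have hsplit : x ^ (-1 : ℝ) = x ^ (α - 1) * x ^ (-α) := by
        rw [← Real.rpow_add hx]; ring_nf
      rw [hsplit, ← mul_assoc]
      refine mul_le_mul_of_nonneg_right ?_ hxa.le
      refine mul_le_mul_of_nonneg_left ?_ hmnn
      exact Real.rpow_le_rpow hx.le h.le (by linarith)
    refine (h1.trans h2).trans ?_
    have : m * X' ^ (α - 1) ≤ max (C + 1) (m * X' ^ (α - 1)) + 1 := by
      have := le_max_right (C + 1) (m * X' ^ (α - 1)); linarith
    exact mul_le_mul_of_nonneg_right this hxa.le

lemma aux_philim (ν : Measure ℝ) (hν0 : ν (Set.Iic 0) = 0)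
    (hint : Integrable (fun l : ℝ => l) ν)
    {α C : ℝ} (hα1 : 1 < α) (hα2 : α < 2) (hC : 0 < C)
    (htail : Tendsto (fun x : ℝ => x ^ α * (ν (Set.Ioi x)).toReal) atTop (nhds C)) :
    Tendsto (fun ρ : ℝ => (∫ l, (Real.exp (-(ρ * l)) - 1 + ρ * l) ∂ν) / ρ ^ α)
      (nhdsWithin 0 (Set.Ioi 0)) (nhds (C * (Real.Gamma (2 - α) / (α - 1)))) := by
  obtain ⟨K, hKpos, hK⟩ := aux_K ν hν0 hint hα1 hC htail
  have hfin : ∀ x : ℝ, 0 < x → ν (Set.Ioi x) ≠ ⊤ := fun x hx =>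
    ((aux_markov ν hν0 hint hx).trans_lt ENNReal.ofReal_lt_top).ne
  have hνmeas : Measurable (fun x : ℝ => (ν (Set.Ioi x)).toReal) := by
    have h : Antitone (fun x : ℝ => ν (Set.Ioi x)) := fun a b hab =>
      measure_mono (Set.Ioi_subset_Ioi hab)
    exact ENNReal.measurable_toReal.comp h.measurable
  have hexple : ∀ u : ℝ, 0 ≤ u → Real.exp (-u) ≤ 1 := fun u hu => by
    rw [Real.exp_le_one_iff]; linarith
  have hexpge : ∀ u : ℝ, 1 - Real.exp (-u) ≤ u := fun u => by
    have := Real.add_one_le_exp (-u); linarith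
  -- the dominating function
  set bound : ℝ → ℝ := fun u => K * ((1 - Real.exp (-u)) * u ^ (-α)) with hbound
  have bound_int : IntegrableOn bound (Set.Ioi 0) :=
    (aux_int_one_sub_exp hα1 hα2).const_mul K
  -- family of functions
  set F : ℝ → ℝ → ℝ := fun ρ u => ((1 - Real.exp (-u)) * (ν (Set.Ioi (u / ρ))).toReal) / ρ ^ α
    with hF
  -- limit function
  set G : ℝ → ℝ := fun u => (1 - Real.exp (-u)) * (C * u ^ (-α)) with hG
  -- dominated convergence
  have htends : Tendsto (fun ρ => ∫ u in Set.Ioi (0:ℝ), F ρ u) (nhdsWithin 0 (Set.Ioi 0))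
      (nhds (∫ u in Set.Ioi (0:ℝ), G u)) := by
    refine tendsto_integral_filter_of_dominated_convergence bound ?_ ?_ bound_int ?_
    · filter_upwards [eventually_mem_nhdsWithin] with ρ (hρ : 0 < ρ)
      exact (((continuous_const.sub (Real.continuous_exp.comp continuous_neg)).measurable.mul
        (hνmeas.comp (measurable_id.div_const ρ))).div_const (ρ ^ α)).aestronglyMeasurable.restrict
    · filter_upwards [eventually_mem_nhdsWithin] with ρ (hρ : 0 < ρ)
      refine (ae_restrict_iff' measurableSet_Ioi).2 (ae_of_all _ ?_)
      intro u (hu : 0 < u)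
      have hdiv : 0 < u / ρ := div_pos hu hρ
      have h1 : 0 ≤ 1 - Real.exp (-u) := by have := hexple u hu.le; linarith
      have hρα : 0 < ρ ^ α := Real.rpow_pos_of_pos hρ _
      have hFnn : 0 ≤ F ρ u := by
        apply div_nonneg _ hρα.le
        exact mul_nonneg h1 ENNReal.toReal_nonneg
      rw [Real.norm_eq_abs, abs_of_nonneg hFnn]
      have hKb : (ν (Set.Ioi (u / ρ))).toReal ≤ K * (u / ρ) ^ (-α) := hK _ hdiv
      have hpow : (u / ρ) ^ (-α) / ρ ^ α = u ^ (-α) := by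
        rw [Real.div_rpow hu.le hρ.le (-α), Real.rpow_neg hu.le, Real.rpow_neg hρ.le]
        field_simp
      calc F ρ u ≤ ((1 - Real.exp (-u)) * (K * (u / ρ) ^ (-α))) / ρ ^ α :=
            (div_le_div_iff_of_pos_right hρα).2 (mul_le_mul_of_nonneg_left hKb h1)
        _ = K * ((1 - Real.exp (-u)) * ((u / ρ) ^ (-α) / ρ ^ α)) := by ring
        _ = bound u := by rw [hpow]
    · refine (ae_restrict_iff' measurableSet_Ioi).2 (ae_of_all _ ?_)
      intro u (hu : 0 < u)
      have hdivtop : Tendsto (fun ρ : ℝ => u / ρ) (nhdsWithin 0 (Set.Ioi 0)) atTop := by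
        have h1 : Tendsto (fun ρ : ℝ => ρ⁻¹) (nhdsWithin 0 (Set.Ioi 0)) atTop :=
          tendsto_inv_nhdsGT_zero
        have := h1.const_mul_atTop hu
        simpa [div_eq_mul_inv] using this
      have hcomp := htail.comp hdivtop
      have heq : ∀ᶠ ρ in nhdsWithin 0 (Set.Ioi 0),
          F ρ u = (1 - Real.exp (-u)) * u ^ (-α) *
            ((u / ρ) ^ α * (ν (Set.Ioi (u / ρ))).toReal) := by
        filter_upwards [eventually_mem_nhdsWithin] with ρ (hρ : 0 < ρ)
        have hdiv : 0 < u / ρ := div_pos hu hρ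
        have hρα : 0 < ρ ^ α := Real.rpow_pos_of_pos hρ _
        have huα : 0 < u ^ α := Real.rpow_pos_of_pos hu _
        rw [hF]
        have hmain : (u / ρ) ^ α = u ^ α / ρ ^ α := Real.div_rpow hu.le hρ.le α
        rw [hmain, Real.rpow_neg hu.le]
        field_simp
      have hlim : Tendsto (fun ρ : ℝ => (1 - Real.exp (-u)) * u ^ (-α) *
          ((u / ρ) ^ α * (ν (Set.Ioi (u / ρ))).toReal)) (nhdsWithin 0 (Set.Ioi 0))
          (nhds ((1 - Real.exp (-u)) * u ^ (-α) * C)) := tendsto_const_nhds.mul hcomp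
      have : (1 - Real.exp (-u)) * u ^ (-α) * C = G u := by rw [hG]; ring
      rw [← this]
      exact Tendsto.congr' (heq.mono fun ρ h => h.symm) hlim
  have hGint : ∫ u in Set.Ioi (0:ℝ), G u = C * (Real.Gamma (2 - α) / (α - 1)) := by
    have h1 : (fun u : ℝ => G u) = fun u => C * ((1 - Real.exp (-u)) * u ^ (-α)) := by
      ext u; rw [hG]; ring
    rw [h1, integral_const_mul, aux_gamma hα1 hα2]
  rw [hGint] at htends
  refine Tendsto.congr' ?_ htends
  filter_upwards [eventually_mem_nhdsWithin] with ρ (hρ : 0 < ρ)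
  have hb1 : IntegrableOn (fun u : ℝ => u ^ (1 - α)) (Set.Ioc (0:ℝ) 1) := by
    have := intervalIntegral.intervalIntegrable_rpow' (r := 1 - α) (a := 0) (b := 1)
      (by linarith)
    rwa [intervalIntegrable_iff_integrableOn_Ioc_of_le (by norm_num)] at this
  have hmeas2 : Measurable
      (fun x : ℝ => (ρ * (1 - Real.exp (-(ρ * x)))) * (ν (Set.Ioi x)).toReal) :=
    (Continuous.measurable (by continuity)).mul hνmeas
  have hRint : IntegrableOn
      (fun x : ℝ => (ρ * (1 - Real.exp (-(ρ * x)))) * (ν (Set.Ioi x)).toReal)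
      (Set.Ioi 0) := by
    have h1 : IntegrableOn
        (fun x : ℝ => (ρ * (1 - Real.exp (-(ρ * x)))) * (ν (Set.Ioi x)).toReal)
        (Set.Ioc 0 1) := by
      refine ((hb1.const_mul (ρ ^ 2 * K)).mono' hmeas2.aestronglyMeasurable.restrict ?_)
      refine (ae_restrict_iff' measurableSet_Ioc).2 (ae_of_all _ ?_)
      intro x hx
      have hx0 : 0 < x := hx.1
      have hρx : 0 ≤ ρ * x := by positivity
      have h1e : 0 ≤ 1 - Real.exp (-(ρ * x)) := by have := hexple _ hρx; linarith
      have h2e : 1 - Real.exp (-(ρ * x)) ≤ ρ * x := hexpge _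
      have hKb : (ν (Set.Ioi x)).toReal ≤ K * x ^ (-α) := hK _ hx0
      have hnn : 0 ≤ (ρ * (1 - Real.exp (-(ρ * x)))) * (ν (Set.Ioi x)).toReal := by
        apply mul_nonneg (by positivity) ENNReal.toReal_nonneg
      rw [Real.norm_eq_abs, abs_of_nonneg hnn]
      calc (ρ * (1 - Real.exp (-(ρ * x)))) * (ν (Set.Ioi x)).toReal
          ≤ (ρ * (ρ * x)) * (K * x ^ (-α)) := by
            apply mul_le_mul (mul_le_mul_of_nonneg_left h2e hρ.le) hKb
              ENNReal.toReal_nonneg (by positivity)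
        _ = ρ ^ 2 * K * (x * x ^ (-α)) := by ring
        _ = ρ ^ 2 * K * x ^ (1 - α) := by
            congr 1
            nth_rewrite 1 [← Real.rpow_one x]
            rw [← Real.rpow_add hx0]
            ring_nf
    have h2 : IntegrableOn
        (fun x : ℝ => (ρ * (1 - Real.exp (-(ρ * x)))) * (ν (Set.Ioi x)).toReal)
        (Set.Ioi 1) := by
      refine (((integrableOn_Ioi_rpow_of_lt (by linarith : -α < -1) one_pos).const_mul
        (ρ * K)).mono' hmeas2.aestronglyMeasurable.restrict ?_)
      refine (ae_restrict_iff' measurableSet_Ioi).2 (ae_of_all _ ?_)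
      intro x (hx : 1 < x)
      have hx0 : (0:ℝ) < x := lt_trans one_pos hx
      have hρx : 0 ≤ ρ * x := by positivity
      have h1e : 0 ≤ 1 - Real.exp (-(ρ * x)) := by have := hexple _ hρx; linarith
      have h2e : 1 - Real.exp (-(ρ * x)) ≤ 1 := by
        have := Real.exp_pos (-(ρ * x)); linarith
      have hKb : (ν (Set.Ioi x)).toReal ≤ K * x ^ (-α) := hK _ hx0
      have hnn : 0 ≤ (ρ * (1 - Real.exp (-(ρ * x)))) * (ν (Set.Ioi x)).toReal := by
        apply mul_nonneg (by positivity) ENNReal.toReal_nonneg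
      rw [Real.norm_eq_abs, abs_of_nonneg hnn]
      calc (ρ * (1 - Real.exp (-(ρ * x)))) * (ν (Set.Ioi x)).toReal
          ≤ (ρ * 1) * (K * x ^ (-α)) := by
            apply mul_le_mul (mul_le_mul_of_nonneg_left h2e hρ.le) hKb
              ENNReal.toReal_nonneg (by positivity)
        _ = ρ * K * x ^ (-α) := by ring
    have := h1.union h2
    rwa [Set.Ioc_union_Ioi_eq_Ioi (zero_le_one)] at this
  have hcv : ∫ x in Set.Ioi (0:ℝ), (ρ * (1 - Real.exp (-(ρ * x)))) * (ν (Set.Ioi x)).toReal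
      = ∫ u in Set.Ioi (0:ℝ), (1 - Real.exp (-u)) * (ν (Set.Ioi (u / ρ))).toReal := by
    set g : ℝ → ℝ := fun u => (1 - Real.exp (-u)) * (ν (Set.Ioi (u / ρ))).toReal with hg
    have h0 := integral_comp_mul_left_Ioi g 0 hρ
    rw [mul_zero] at h0
    calc ∫ x in Set.Ioi (0:ℝ), (ρ * (1 - Real.exp (-(ρ * x)))) * (ν (Set.Ioi x)).toReal
        = ∫ x in Set.Ioi (0:ℝ), ρ * g (ρ * x) := by
          refine setIntegral_congr_fun measurableSet_Ioi ?_
          intro x _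
          rw [hg]
          simp only
          rw [mul_div_cancel_left₀ _ hρ.ne']
          ring
      _ = ρ * ∫ x in Set.Ioi (0:ℝ), g (ρ * x) := by rw [integral_const_mul]
      _ = ρ * (ρ⁻¹ • ∫ u in Set.Ioi (0:ℝ), g u) := by rw [h0]
      _ = ∫ u in Set.Ioi (0:ℝ), g u := by
          rw [smul_eq_mul, ← mul_assoc, mul_inv_cancel₀ hρ.ne', one_mul]
  rw [hF]
  simp only
  rw [aux_repr ν hν0 hint hfin hρ hRint, hcv, integral_div]

/-- Let `ν` be a measure on `(0,∞)` with finite positive mean `m` whose tail satisfies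
`ν̄(x) ~ C x^{-α}` as `x → ∞`, with `α ∈ (1,2)`, `C > 0`. Then for every `y ≥ 0`,
`lim_{t→(1/m)⁻} (1-mt)^{-α/(α-1)} Ψ^(t)((1-mt)^{1/(α-1)} y)
  = -y - (C Γ(2-α)/(m(α-1))) y^α`. -/
theorem Psi_rescaled_limit_stable
    (ν : Measure ℝ) (hν0 : ν (Set.Iic 0) = 0)
    (hint : Integrable (fun l : ℝ => l) ν)
    (m : ℝ) (hm : m = ∫ l, l ∂ν) (hmpos : 0 < m)
    (α C : ℝ) (hα1 : 1 < α) (hα2 : α < 2) (hC : 0 < C)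
    (htail : Tendsto (fun x : ℝ => x ^ α * (ν (Set.Ioi x)).toReal)
      atTop (nhds C))
    (y : ℝ) (hy : 0 ≤ y) :
    Tendsto
      (fun t : ℝ =>
        (1 - m * t) ^ (-(α / (α - 1))) *
          Psi ν t ((1 - m * t) ^ (1 / (α - 1)) * y))
      (nhdsWithin (1 / m) (Set.Iio (1 / m)))
      (nhds (-y - (C * Real.Gamma (2 - α) / (m * (α - 1))) * y ^ α)) := by
  have hαne : α - 1 ≠ 0 := by intro h; linarith
  rcases eq_or_lt_of_le hy with hy0 | hy'
  · -- y = 0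
    have h0 : (fun t : ℝ =>
        (1 - m * t) ^ (-(α / (α - 1))) *
          Psi ν t ((1 - m * t) ^ (1 / (α - 1)) * y)) = fun _ => (0:ℝ) := by
      funext t
      rw [← hy0, mul_zero]
      have : Psi ν t 0 = 0 := by
        simp [Psi]
      rw [this, mul_zero]
    rw [h0, ← hy0]
    have : -(0:ℝ) - (C * Real.Gamma (2 - α) / (m * (α - 1))) * (0:ℝ) ^ α = 0 := by
      rw [Real.zero_rpow (by intro h; rw [h] at hα1; linarith)]
      ring
    rw [this]
    exact tendsto_const_nhds
  · -- y > 0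
    set L := C * (Real.Gamma (2 - α) / (α - 1)) with hL
    have hεt : Tendsto (fun t : ℝ => 1 - m * t) (nhdsWithin (1/m) (Set.Iio (1/m)))
        (nhdsWithin 0 (Set.Ioi 0)) := by
      rw [tendsto_nhdsWithin_iff]
      constructor
      · have h1 : Tendsto (fun t : ℝ => 1 - m * t) (nhds (1/m)) (nhds (1 - m * (1/m))) :=
          tendsto_const_nhds.sub (tendsto_const_nhds.mul tendsto_id)
        rw [mul_one_div, div_self hmpos.ne', sub_self] at h1
        exact h1.mono_left nhdsWithin_le_nhds
      · filter_upwards [eventually_mem_nhdsWithin] with t (ht : t < 1/m)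
        have : m * t < 1 := by
          have := mul_lt_mul_of_pos_left ht hmpos
          rwa [mul_one_div, div_self hmpos.ne'] at this
        exact Set.mem_Ioi.2 (by linarith)
    have hρt : Tendsto (fun t : ℝ => (1 - m * t) ^ (1/(α-1)) * y)
        (nhdsWithin (1/m) (Set.Iio (1/m))) (nhdsWithin 0 (Set.Ioi 0)) := by
      rw [tendsto_nhdsWithin_iff]
      constructor
      · have hc : ContinuousAt (fun e : ℝ => e ^ (1/(α-1))) 0 :=
          Real.continuousAt_rpow_const 0 _ (Or.inr (le_of_lt (div_pos one_pos (by linarith))))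
        have h2 := (hc.tendsto.comp (hεt.mono_right nhdsWithin_le_nhds)).mul_const y
        rw [Real.zero_rpow (ne_of_gt (div_pos one_pos (by linarith))), zero_mul] at h2
        exact h2
      · filter_upwards [hεt.eventually eventually_mem_nhdsWithin] with t ht
        exact Set.mem_Ioi.2 (mul_pos (Real.rpow_pos_of_pos ht _) hy')
    have hQ := (aux_philim ν hν0 hint hα1 hα2 hC htail).comp hρt
    have htt : Tendsto (fun t : ℝ => t) (nhdsWithin (1/m) (Set.Iio (1/m))) (nhds (1/m)) :=
      tendsto_id.mono_left nhdsWithin_le_nhds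
    have hmain : Tendsto (fun t : ℝ => -y - t * (y ^ α *
        ((∫ l, (Real.exp (-((( 1 - m * t) ^ (1/(α-1)) * y) * l)) - 1 +
          ((1 - m * t) ^ (1/(α-1)) * y) * l) ∂ν) / ((1 - m * t) ^ (1/(α-1)) * y) ^ α)))
        (nhdsWithin (1/m) (Set.Iio (1/m))) (nhds (-y - (1/m) * (y ^ α * L))) :=
      tendsto_const_nhds.sub (htt.mul (tendsto_const_nhds.mul hQ))
    have hval : -y - (1/m) * (y ^ α * L) =
        -y - (C * Real.Gamma (2 - α) / (m * (α - 1))) * y ^ α := by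
      rw [hL]
      field_simp
    rw [← hval]
    refine Tendsto.congr' ?_ hmain
    filter_upwards [eventually_mem_nhdsWithin] with t (ht : t < 1/m)
    set ε : ℝ := 1 - m * t with hεdef
    have hε : 0 < ε := by
      have : m * t < 1 := by
        have := mul_lt_mul_of_pos_left ht hmpos
        rwa [mul_one_div, div_self hmpos.ne'] at this
      simp only [hεdef]; linarith
    set ρ : ℝ := ε ^ (1/(α-1)) * y with hρdef
    have hρ : 0 < ρ := mul_pos (Real.rpow_pos_of_pos hε _) hy'
    set φ : ℝ := ∫ l, (Real.exp (-(ρ * l)) - 1 + ρ * l) ∂ν with hφdef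
    have hsplit : ∫ l, (1 - Real.exp (-(ρ * l))) ∂ν = ρ * m - φ := by
      have h1 : (fun l : ℝ => 1 - Real.exp (-(ρ * l)))
          = fun l : ℝ => ρ * l - (Real.exp (-(ρ * l)) - 1 + ρ * l) := by
        funext l; ring
      rw [h1, integral_sub (hint.const_mul ρ) (aux_int1 ν hν0 hint hρ.le),
        integral_const_mul, ← hm, hφdef]
    have e1 : ε ^ (-(α/(α-1))) * ρ = ε⁻¹ * y := by
      rw [hρdef, ← mul_assoc, ← Real.rpow_add hε]
      have : -(α/(α-1)) + 1/(α-1) = -1 := by field_simp; ring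
      rw [this, Real.rpow_neg_one]
    have hρpow : ρ ^ α = ε ^ (α/(α-1)) * y ^ α := by
      rw [hρdef, Real.mul_rpow (Real.rpow_nonneg hε.le _) hy'.le,
        ← Real.rpow_mul hε.le]
      congr 2
      field_simp
    have e2 : ε ^ (-(α/(α-1))) * φ = y ^ α * (φ / ρ ^ α) := by
      rw [hρpow, Real.rpow_neg hε.le]
      have h1 : (0:ℝ) < ε ^ (α/(α-1)) := Real.rpow_pos_of_pos hε _
      have h2 : (0:ℝ) < y ^ α := Real.rpow_pos_of_pos hy' _
      field_simp
    -- final computation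
    have htm : t * m - 1 = -ε := by rw [hεdef]; ring
    have hc : ε ^ (-(α/(α-1))) * Psi ν t ρ = -y - t * (y ^ α * (φ / ρ ^ α)) := by
      rw [Psi, hsplit]
      calc ε ^ (-(α/(α-1))) * (-ρ + t * (ρ * m - φ))
          = (ε ^ (-(α/(α-1))) * ρ) * (t * m - 1) - t * (ε ^ (-(α/(α-1))) * φ) := by ring
        _ = (ε⁻¹ * y) * (-ε) - t * (y ^ α * (φ / ρ ^ α)) := by rw [e1, e2, htm]
        _ = -y - t * (y ^ α * (φ / ρ ^ α)) := by
            rw [show (ε⁻¹ * y) * (-ε) = -y from by field_simp]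
    exact hc.symm

end Aux
end

section
/- Let C > 0 and assume ν̄(x) ~ C x^{−2} as x → ∞. Then for every y ≥ 0, lim_{t→(1/m)⁻} L_t (1−mt)^{−2} Ψ^{(t)}((1−mt) y / L_t) = −y − (C/m) y², where L_t = log(1/(1−mt)). -/
open MeasureTheory Filter

open Set Real

lemma one_sub_exp_neg_nonneg {u : ℝ} (hu : 0 ≤ u) : 0 ≤ 1 - Real.exp (-u) := by
  have := Real.exp_le_one_iff.2 (neg_nonpos.2 hu); linarith

lemma one_sub_exp_neg_le_one {u : ℝ} : 1 - Real.exp (-u) ≤ 1 := by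
  have := Real.exp_pos (-u); linarith

lemma one_sub_exp_neg_le {u : ℝ} : 1 - Real.exp (-u) ≤ u := by
  have := Real.add_one_le_exp (-u); linarith

lemma le_one_sub_exp_neg {u : ℝ} (hu0 : 0 ≤ u) (hu1 : u ≤ 1) :
    u - u ^ 2 ≤ 1 - Real.exp (-u) := by
  have h := Real.abs_exp_sub_one_sub_id_le (x := -u) (by rwa [abs_neg, abs_of_nonneg hu0])
  rw [abs_le] at h
  have h2 := h.2
  nlinarith [h2]

lemma rpow_neg_two_eq {x : ℝ} (hx : 0 < x) : x ^ (-2 : ℝ) = (x ^ 2)⁻¹ := by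
  rw [Real.rpow_neg hx.le, show ((2:ℝ) = ((2:ℕ):ℝ)) by norm_num, Real.rpow_natCast]


variable {ν : Measure ℝ} {m : ℝ}

lemma nu_ae_pos (hν0 : ν (Set.Iic 0) = 0) : ∀ᵐ l : ℝ ∂ν, 0 < l := by
  rw [ae_iff]
  convert hν0 using 2
  ext l
  simp [not_lt]

lemma nu_lint_id (hν0 : ν (Set.Iic 0) = 0)
    (hint : Integrable (fun l : ℝ => l) ν) (hm : m = ∫ l, l ∂ν) : ∫⁻ l, ENNReal.ofReal l ∂ν = ENNReal.ofReal m := by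
  rw [hm, ← ofReal_integral_eq_lintegral_ofReal hint
    ((nu_ae_pos hν0).mono fun _ h => h.le)]

lemma nu_tail_meas' (ν : Measure ℝ) : Measurable fun x : ℝ => ν (Set.Ioi x) :=
  Antitone.measurable fun _ _ h => measure_mono (Set.Ioi_subset_Ioi h)

lemma nu_markov (hν0 : ν (Set.Iic 0) = 0)
    (hint : Integrable (fun l : ℝ => l) ν) (hm : m = ∫ l, l ∂ν) {x : ℝ} (hx : 0 < x) :
    ENNReal.ofReal x * ν (Set.Ioi x) ≤ ENNReal.ofReal m := by
  calc ENNReal.ofReal x * ν (Set.Ioi x) = ∫⁻ _ in Set.Ioi x, ENNReal.ofReal x ∂ν := by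
        rw [setLIntegral_const]
    _ ≤ ∫⁻ l in Set.Ioi x, ENNReal.ofReal l ∂ν :=
        setLIntegral_mono (by fun_prop) fun l hl => ENNReal.ofReal_le_ofReal (le_of_lt hl)
    _ ≤ ∫⁻ l, ENNReal.ofReal l ∂ν := setLIntegral_le_lintegral _ _
    _ = ENNReal.ofReal m := nu_lint_id hν0 hint hm

lemma nu_tail_ne_top (hν0 : ν (Set.Iic 0) = 0)
    (hint : Integrable (fun l : ℝ => l) ν) (hm : m = ∫ l, l ∂ν) {x : ℝ} (hx : 0 < x) : ν (Set.Ioi x) ≠ ⊤ := by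
  intro h
  have hle := nu_markov hν0 hint hm hx
  rw [h, ENNReal.mul_top (by simpa using hx : ENNReal.ofReal x ≠ 0)] at hle
  exact (lt_irrefl _ (lt_of_le_of_lt hle ENNReal.ofReal_lt_top)).elim

lemma nu_m_nonneg (hν0 : ν (Set.Iic 0) = 0)
    (hint : Integrable (fun l : ℝ => l) ν) (hm : m = ∫ l, l ∂ν) : 0 ≤ m := by
  rw [hm]
  exact integral_nonneg_of_ae ((nu_ae_pos hν0).mono fun _ h => h.le)

lemma nu_tail_mul_le (hν0 : ν (Set.Iic 0) = 0)
    (hint : Integrable (fun l : ℝ => l) ν) (hm : m = ∫ l, l ∂ν) {x : ℝ} (hx : 0 < x) :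
    x * (ν (Set.Ioi x)).toReal ≤ m := by
  have hle := nu_markov hν0 hint hm hx
  have h1 : (ENNReal.ofReal x * ν (Set.Ioi x)).toReal ≤ (ENNReal.ofReal m).toReal :=
    ENNReal.toReal_mono ENNReal.ofReal_ne_top hle
  rwa [ENNReal.toReal_mul, ENNReal.toReal_ofReal hx.le,
    ENNReal.toReal_ofReal (nu_m_nonneg hν0 hint hm)] at h1

lemma nu_tail_lintegral (hν0 : ν (Set.Iic 0) = 0)
    (hint : Integrable (fun l : ℝ => l) ν) (hm : m = ∫ l, l ∂ν) :
    ∫⁻ t in Set.Ioi 0, ν (Set.Ioi t) = ENNReal.ofReal m := by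
  rw [← nu_lint_id hν0 hint hm,
    lintegral_eq_lintegral_meas_lt ν ((nu_ae_pos hν0).mono fun _ h => h.le)
      aemeasurable_id]
  rfl

lemma nu_tail_integrableOn (hν0 : ν (Set.Iic 0) = 0)
    (hint : Integrable (fun l : ℝ => l) ν) (hm : m = ∫ l, l ∂ν) :
    IntegrableOn (fun x : ℝ => (ν (Set.Ioi x)).toReal) (Set.Ioi 0) := by
  refine ⟨(nu_tail_meas' ν).ennreal_toReal.aestronglyMeasurable, ?_⟩
  rw [hasFiniteIntegral_iff_ofReal (Eventually.of_forall fun _ => ENNReal.toReal_nonneg)]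
  calc ∫⁻ t in Set.Ioi 0, ENNReal.ofReal (ν (Set.Ioi t)).toReal
      ≤ ∫⁻ t in Set.Ioi 0, ν (Set.Ioi t) := lintegral_mono fun t => ENNReal.ofReal_toReal_le
    _ = ENNReal.ofReal m := nu_tail_lintegral hν0 hint hm
    _ < ⊤ := ENNReal.ofReal_lt_top

set_option maxHeartbeats 1000000 in
lemma psi_repr (hν0 : ν (Set.Iic 0) = 0)
    (hint : Integrable (fun l : ℝ => l) ν) (hm : m = ∫ l, l ∂ν)
    {ρ : ℝ} (hρ : 0 < ρ) :
    ∫ l, (1 - Real.exp (-(ρ * l))) ∂ν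
      = ρ * m - ρ * ∫ x in Set.Ioi (0:ℝ),
          (1 - Real.exp (-(ρ * x))) * (ν (Set.Ioi x)).toReal := by
  set T : ℝ := ∫ x in Set.Ioi (0:ℝ), (1 - Real.exp (-(ρ * x))) * (ν (Set.Ioi x)).toReal with hT
  have hG : ∀ l : ℝ, (∫ t in (0:ℝ)..l, ρ * (1 - Real.exp (-(ρ * t))))
      = ρ * l - (1 - Real.exp (-(ρ * l))) := by
    intro l
    have hderiv : ∀ t ∈ Set.uIcc (0:ℝ) l,
        HasDerivAt (fun s => ρ * s + Real.exp (-(ρ * s)))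
          (ρ * (1 - Real.exp (-(ρ * t)))) t := by
      intro t _
      have h1 : HasDerivAt (fun s : ℝ => ρ * s) ρ t := by
        simpa using (hasDerivAt_id t).const_mul ρ
      have h2 : HasDerivAt (fun s : ℝ => -(ρ * s)) (-ρ) t := h1.neg
      have h3 : HasDerivAt (fun s : ℝ => Real.exp (-(ρ * s)))
          (Real.exp (-(ρ * t)) * (-ρ)) t := h2.exp
      have h4 := h1.add h3
      exact h4.congr_deriv (by ring)
    have hcont : IntervalIntegrable (fun t => ρ * (1 - Real.exp (-(ρ * t)))) volume 0 l :=
      (by fun_prop : Continuous fun t : ℝ => ρ * (1 - Real.exp (-(ρ * t)))).intervalIntegrable 0 l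
    rw [intervalIntegral.integral_eq_sub_of_hasDerivAt hderiv hcont]
    simp [Real.exp_zero]
    ring
  have g_nn : ∀ᵐ t ∂(volume.restrict (Set.Ioi (0:ℝ))),
      0 ≤ ρ * (1 - Real.exp (-(ρ * t))) := by
    rw [ae_restrict_iff' measurableSet_Ioi]
    exact Eventually.of_forall fun t ht =>
      mul_nonneg hρ.le (one_sub_exp_neg_nonneg (mul_nonneg hρ.le (le_of_lt ht)))
  have g_intble : ∀ t > (0:ℝ),
      IntervalIntegrable (fun s => ρ * (1 - Real.exp (-(ρ * s)))) volume 0 t := fun t _ =>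
    (by fun_prop : Continuous fun s : ℝ => ρ * (1 - Real.exp (-(ρ * s)))).intervalIntegrable 0 t
  have key := lintegral_comp_eq_lintegral_meas_lt_mul ν (f := fun l : ℝ => l)
    ((nu_ae_pos hν0).mono fun _ h => h.le) aemeasurable_id g_intble g_nn
  simp only [hG] at key
  have hT_nn : 0 ≤ T :=
    setIntegral_nonneg measurableSet_Ioi fun x hx =>
      mul_nonneg (one_sub_exp_neg_nonneg (mul_nonneg hρ.le (le_of_lt hx))) ENNReal.toReal_nonneg
  have hfn_int : IntegrableOn
      (fun x : ℝ => (1 - Real.exp (-(ρ * x))) * (ν (Set.Ioi x)).toReal) (Set.Ioi 0) := by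
    refine (nu_tail_integrableOn hν0 hint hm).mono' ?_ ?_
    · exact ((continuous_const.sub ((continuous_const.mul continuous_id).neg.rexp)).aestronglyMeasurable.mul
        (nu_tail_meas' ν).ennreal_toReal.aestronglyMeasurable)
    · rw [ae_restrict_iff' measurableSet_Ioi]
      refine Eventually.of_forall fun x hx => ?_
      have h1 : 0 ≤ 1 - Real.exp (-(ρ * x)) :=
        one_sub_exp_neg_nonneg (mul_nonneg hρ.le (le_of_lt hx))
      have h2 : 1 - Real.exp (-(ρ * x)) ≤ 1 := by
        have := Real.exp_pos (-(ρ * x)); linarith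
      rw [Real.norm_eq_abs, abs_of_nonneg (mul_nonneg h1 ENNReal.toReal_nonneg)]
      exact mul_le_of_le_one_left ENNReal.toReal_nonneg h2
  have hRHS : ∫⁻ t in Set.Ioi 0,
      ν {a : ℝ | t < a} * ENNReal.ofReal (ρ * (1 - Real.exp (-(ρ * t))))
      = ENNReal.ofReal (ρ * T) := by
    have h1 : ∫⁻ t in Set.Ioi 0,
        ν {a : ℝ | t < a} * ENNReal.ofReal (ρ * (1 - Real.exp (-(ρ * t))))
        = ∫⁻ t in Set.Ioi 0, ENNReal.ofReal
            ((1 - Real.exp (-(ρ * t))) * (ν (Set.Ioi t)).toReal * ρ) := by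
      refine setLIntegral_congr_fun measurableSet_Ioi (fun t ht => ?_)
      have hne : ν (Set.Ioi t) ≠ ⊤ := nu_tail_ne_top hν0 hint hm ht
      have : ν {a : ℝ | t < a} = ENNReal.ofReal ((ν (Set.Ioi t)).toReal) :=
        (ENNReal.ofReal_toReal hne).symm
      rw [this, ← ENNReal.ofReal_mul ENNReal.toReal_nonneg]
      congr 1
      ring
    rw [h1, ← ofReal_integral_eq_lintegral_ofReal (hfn_int.mul_const ρ) ?hnn]
    · congr 1
      rw [integral_mul_const]
      ring
    case hnn =>
      refine (ae_restrict_iff' measurableSet_Ioi).2 (Eventually.of_forall fun x hx => ?_)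
      have h1 : 0 ≤ 1 - Real.exp (-(ρ * x)) :=
        one_sub_exp_neg_nonneg (mul_nonneg hρ.le (le_of_lt hx))
      have h2 : (0:ℝ) ≤ (ν (Set.Ioi x)).toReal := ENNReal.toReal_nonneg
      show (0:ℝ) ≤ (1 - Real.exp (-(ρ * x))) * (ν (Set.Ioi x)).toReal * ρ
      positivity
  have hbig_nn : ∀ᵐ l ∂ν, 0 ≤ ρ * l - (1 - Real.exp (-(ρ * l))) :=
    (nu_ae_pos hν0).mono fun l hl => by
      have := one_sub_exp_neg_le (u := ρ * l); linarith
  have hbig_meas : AEStronglyMeasurable (fun l => ρ * l - (1 - Real.exp (-(ρ * l)))) ν :=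
    (by fun_prop : Continuous fun l : ℝ => ρ * l - (1 - Real.exp (-(ρ * l)))).aestronglyMeasurable
  have hbig_int : Integrable (fun l => ρ * l - (1 - Real.exp (-(ρ * l)))) ν := by
    refine ⟨hbig_meas, ?_⟩
    rw [hasFiniteIntegral_iff_ofReal hbig_nn, key, hRHS]
    exact ENNReal.ofReal_lt_top
  have hval : ∫ l, (ρ * l - (1 - Real.exp (-(ρ * l)))) ∂ν = ρ * T := by
    rw [integral_eq_lintegral_of_nonneg_ae hbig_nn hbig_meas, key, hRHS,
      ENNReal.toReal_ofReal (by positivity)]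
  have hfinal := integral_sub (hint.const_mul ρ) hbig_int
  simp only [sub_sub_cancel] at hfinal
  rw [hfinal, hval, integral_const_mul, ← hm]
set_option maxHeartbeats 2000000 in
lemma core_tendsto (w : ℝ → ℝ) (hw_meas : Measurable w) (hw_nn : ∀ x, 0 ≤ w x)
    (m : ℝ) (hwm : ∀ x, 0 < x → x * w x ≤ m)
    (hw_int : IntegrableOn w (Set.Ioi 0))
    (C : ℝ) (hC : 0 < C)
    (htail : Tendsto (fun x => x ^ 2 * w x) atTop (nhds C)) :
    Tendsto (fun ρ => (∫ x in Set.Ioi (0:ℝ), (1 - Real.exp (-(ρ * x))) * w x) /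
        (ρ * Real.log (1 / ρ)))
      (nhdsWithin 0 (Set.Ioi 0)) (nhds C) := by
  have hm0 : 0 ≤ m := le_trans (by simpa using mul_nonneg zero_le_one (hw_nn 1)) (hwm 1 one_pos)
  rw [Metric.tendsto_nhdsWithin_nhds]
  intro ε hε
  set δ' : ℝ := min ε C / 3 with hδ'def
  have hδ'pos : 0 < δ' := by
    have := lt_min hε hC
    positivity
  have hδ'ε : δ' ≤ ε / 3 := by
    have : min ε C ≤ ε := min_le_left _ _
    simp only [hδ'def]; linarith
  have hδ'C : δ' < C := by
    have : min ε C ≤ C := min_le_right _ _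
    simp only [hδ'def]; linarith
  -- choose M
  have htail' : ∀ᶠ x in atTop, |x ^ 2 * w x - C| ≤ δ' := by
    have := Metric.tendsto_nhds.mp htail δ' hδ'pos
    filter_upwards [this] with x hx
    rw [Real.dist_eq] at hx; exact hx.le
  obtain ⟨M₀, hM₀⟩ := eventually_atTop.1 htail'
  set M : ℝ := max M₀ 1 with hMdef
  have hM1 : 1 ≤ M := le_max_right _ _
  have hM0 : 0 < M := lt_of_lt_of_le one_pos hM1
  have hMlog : 0 ≤ Real.log M := Real.log_nonneg hM1
  have htailM : ∀ x, M ≤ x → |x ^ 2 * w x - C| ≤ δ' := fun x hx =>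
    hM₀ x (le_trans (le_max_left _ _) hx)
  set K₁ : ℝ := m * M + (C + δ') * (Real.log M + 1) with hK₁def
  have hK₁0 : 0 ≤ K₁ := by positivity
  set L₀ : ℝ := max 1 (3 * (K₁ + 1) / ε) with hL₀def
  refine ⟨min (1 / M) (Real.exp (-L₀)), lt_min (by positivity) (Real.exp_pos _), ?_⟩
  intro ρ hρmem hρdist
  have hρ : 0 < ρ := hρmem
  rw [Real.dist_eq, sub_zero, abs_of_pos hρ] at hρdist
  rw [Real.dist_eq]
  have hρM : ρ < 1 / M := lt_of_lt_of_le hρdist (min_le_left _ _)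
  have hρe : ρ < Real.exp (-L₀) := lt_of_lt_of_le hρdist (min_le_right _ _)
  set K : ℝ := 1 / ρ with hKdef
  set L' : ℝ := Real.log (1 / ρ) with hL'def
  have hMK : M < K := by
    rw [hKdef, lt_div_iff₀ hρ]
    calc M * ρ < M * (1/M) := by exact mul_lt_mul_of_pos_left hρM hM0
    _ = 1 := by field_simp
  have hK0 : 0 < K := by positivity
  have hL₀L : L₀ < L' := by
    have := Real.log_lt_log hρ hρe
    rw [Real.log_exp] at this
    rw [hL'def, one_div, Real.log_inv]
    linarith
  have hL₀1 : 1 ≤ L₀ := le_max_left _ _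
  have hL₀ε : 3 * (K₁ + 1) / ε ≤ L₀ := le_max_right _ _
  have hL'pos : 0 < L' := lt_of_lt_of_le one_pos (le_trans hL₀1 hL₀L.le)
  set f : ℝ → ℝ := fun x => (1 - Real.exp (-(ρ * x))) * w x with hfdef
  set g : ℝ → ℝ := fun x => (1 - Real.exp (-(ρ * x))) * x ^ (-2 : ℝ) with hgdef
  have hf_meas : Measurable f := by fun_prop
  have hg_meas : Measurable g := by fun_prop
  have hf_nn : ∀ x, 0 ≤ x → 0 ≤ f x := fun x hx =>
    mul_nonneg (one_sub_exp_neg_nonneg (mul_nonneg hρ.le hx)) (hw_nn x)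
  have hg_nn : ∀ x, 0 ≤ x → 0 ≤ g x := fun x hx =>
    mul_nonneg (one_sub_exp_neg_nonneg (mul_nonneg hρ.le hx)) (Real.rpow_nonneg hx _)
  have hf_le_w : ∀ x, f x ≤ w x := fun x =>
    mul_le_of_le_one_left (hw_nn x) one_sub_exp_neg_le_one
  have hg_le : ∀ x, 0 ≤ x → g x ≤ x ^ (-2 : ℝ) := fun x hx =>
    mul_le_of_le_one_left (Real.rpow_nonneg hx _) one_sub_exp_neg_le_one
  have hf_int : IntegrableOn f (Ioi 0) := by
    refine hw_int.mono' hf_meas.aestronglyMeasurable ?_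
    rw [ae_restrict_iff' measurableSet_Ioi]
    refine Eventually.of_forall fun x hx => ?_
    rw [Real.norm_eq_abs, abs_of_nonneg (hf_nn x (le_of_lt hx))]
    exact hf_le_w x
  have hrw_int : IntegrableOn (fun x : ℝ => x ^ (-2 : ℝ)) (Ioi M) :=
    integrableOn_Ioi_rpow_of_lt (by norm_num) hM0
  have hg_int : IntegrableOn g (Ioi M) := by
    refine hrw_int.mono' hg_meas.aestronglyMeasurable ?_
    rw [ae_restrict_iff' measurableSet_Ioi]
    refine Eventually.of_forall fun x hx => ?_
    have hx0 : (0:ℝ) ≤ x := le_of_lt (hM0.trans hx)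
    rw [Real.norm_eq_abs, abs_of_nonneg (hg_nn x hx0)]
    exact hg_le x hx0
  -- splitting T
  have hsplit : ∫ x in Ioi (0:ℝ), f x = (∫ x in Ioc (0:ℝ) M, f x) + ∫ x in Ioi M, f x := by
    rw [← setIntegral_union (Ioc_disjoint_Ioi le_rfl) measurableSet_Ioi
      (hf_int.mono_set Ioc_subset_Ioi_self) (hf_int.mono_set (Ioi_subset_Ioi hM0.le)),
      Ioc_union_Ioi_eq_Ioi hM0.le]
  -- T1 bounds
  have hT1l : 0 ≤ ∫ x in Ioc (0:ℝ) M, f x :=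
    setIntegral_nonneg measurableSet_Ioc fun x hx => hf_nn x hx.1.le
  have hT1u : ∫ x in Ioc (0:ℝ) M, f x ≤ ρ * m * M := by
    have hle : ∫ x in Ioc (0:ℝ) M, f x ≤ ∫ _x in Ioc (0:ℝ) M, ρ * m := by
      refine setIntegral_mono_on (hf_int.mono_set Ioc_subset_Ioi_self)
        (integrableOn_const measure_Ioc_lt_top.ne) measurableSet_Ioc ?_
      intro x hx
      have h1 : 1 - Real.exp (-(ρ * x)) ≤ ρ * x := one_sub_exp_neg_le
      have h2 : f x ≤ (ρ * x) * w x := mul_le_mul_of_nonneg_right h1 (hw_nn x)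
      have h3 : x * w x ≤ m := hwm x hx.1
      calc f x ≤ (ρ * x) * w x := h2
        _ = ρ * (x * w x) := by ring
        _ ≤ ρ * m := mul_le_mul_of_nonneg_left h3 hρ.le
    rw [setIntegral_const, Real.volume_real_Ioc_of_le (by linarith), smul_eq_mul] at hle
    calc ∫ x in Ioc (0:ℝ) M, f x ≤ (M - 0) * (ρ * m) := hle
      _ = ρ * m * M := by ring
  -- tail comparisons of w
  have hwle : ∀ x, M ≤ x → w x ≤ (C + δ') * x ^ (-2 : ℝ) := by
    intro x hx
    have hx0 : (0:ℝ) < x := lt_of_lt_of_le hM0 hx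
    have h := (abs_le.1 (htailM x hx)).2
    have hx2 : (0:ℝ) < x ^ 2 := by positivity
    rw [rpow_neg_two_eq hx0, mul_comm (C + δ'), ← div_eq_inv_mul, le_div_iff₀ hx2]
    nlinarith [h]
  have hwge : ∀ x, M ≤ x → (C - δ') * x ^ (-2 : ℝ) ≤ w x := by
    intro x hx
    have hx0 : (0:ℝ) < x := lt_of_lt_of_le hM0 hx
    have h := (abs_le.1 (htailM x hx)).1
    have hx2 : (0:ℝ) < x ^ 2 := by positivity
    rw [rpow_neg_two_eq hx0, mul_comm (C - δ'), ← div_eq_inv_mul, div_le_iff₀ hx2]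
    nlinarith [h]
  -- T2 bounds via I
  have hT2u : ∫ x in Ioi M, f x ≤ (C + δ') * ∫ x in Ioi M, g x := by
    rw [← integral_const_mul]
    refine setIntegral_mono_on (hf_int.mono_set (Ioi_subset_Ioi hM0.le))
      (hg_int.const_mul _) measurableSet_Ioi ?_
    intro x hx
    have hx0 : (0:ℝ) < x := hM0.trans hx
    have h1 : 0 ≤ 1 - Real.exp (-(ρ * x)) := one_sub_exp_neg_nonneg (by positivity)
    calc f x ≤ (1 - Real.exp (-(ρ * x))) * ((C + δ') * x ^ (-2:ℝ)) :=
          mul_le_mul_of_nonneg_left (hwle x hx.le) h1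
      _ = (C + δ') * g x := by rw [hgdef]; ring
  have hT2l : (C - δ') * (∫ x in Ioi M, g x) ≤ ∫ x in Ioi M, f x := by
    rw [← integral_const_mul]
    refine setIntegral_mono_on (hg_int.const_mul _)
      (hf_int.mono_set (Ioi_subset_Ioi hM0.le)) measurableSet_Ioi ?_
    intro x hx
    have hx0 : (0:ℝ) < x := hM0.trans hx
    have h1 : 0 ≤ 1 - Real.exp (-(ρ * x)) := one_sub_exp_neg_nonneg (by positivity)
    calc (C - δ') * g x = (1 - Real.exp (-(ρ * x))) * ((C - δ') * x ^ (-2:ℝ)) := by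
          rw [hgdef]; ring
      _ ≤ f x := mul_le_mul_of_nonneg_left (hwge x hx.le) h1
  -- bounds on I
  have hIsplit : ∫ x in Ioi M, g x = (∫ x in Ioc M K, g x) + ∫ x in Ioi K, g x := by
    rw [← setIntegral_union (Ioc_disjoint_Ioi le_rfl) measurableSet_Ioi
      (hg_int.mono_set Ioc_subset_Ioi_self) (hg_int.mono_set (Ioi_subset_Ioi hMK.le)),
      Ioc_union_Ioi_eq_Ioi hMK.le]
  have hI2l : 0 ≤ ∫ x in Ioi K, g x :=
    setIntegral_nonneg measurableSet_Ioi fun x hx => hg_nn x (hK0.trans hx).le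
  have hI2u : ∫ x in Ioi K, g x ≤ ρ := by
    have hval : ∫ x in Ioi K, x ^ (-2:ℝ) = ρ := by
      rw [integral_Ioi_rpow_of_lt (by norm_num) hK0]
      norm_num
      rw [Real.rpow_neg_one, hKdef, one_div, inv_inv]
    rw [← hval]
    refine setIntegral_mono_on (hg_int.mono_set (Ioi_subset_Ioi hMK.le))
      (hrw_int.mono_set (Ioi_subset_Ioi hMK.le)) measurableSet_Ioi ?_
    exact fun x hx => hg_le x (hK0.trans hx).le
  have hinv_int : IntegrableOn (fun x : ℝ => x⁻¹) (Ioc M K) := by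
    have h : IntervalIntegrable (fun x : ℝ => x⁻¹) volume M K := by
      refine intervalIntegral.intervalIntegrable_inv ?_ continuousOn_id
      intro x hx
      rw [uIcc_of_le hMK.le] at hx
      exact ne_of_gt (lt_of_lt_of_le hM0 hx.1)
    exact h.1
  have hlogMK : ∫ x in Ioc M K, x⁻¹ = L' - Real.log M := by
    rw [← intervalIntegral.integral_of_le hMK.le, integral_inv_of_pos hM0 hK0,
      Real.log_div (ne_of_gt hK0) (ne_of_gt hM0), hL'def, hKdef]
  have hI1u : ∫ x in Ioc M K, g x ≤ ρ * (L' - Real.log M) := by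
    have hle : ∫ x in Ioc M K, g x ≤ ∫ x in Ioc M K, ρ * x⁻¹ := by
      refine setIntegral_mono_on (hg_int.mono_set Ioc_subset_Ioi_self)
        (hinv_int.const_mul ρ) measurableSet_Ioc ?_
      intro x hx
      have hx0 : (0:ℝ) < x := hM0.trans hx.1
      have h1 : 1 - Real.exp (-(ρ * x)) ≤ ρ * x := one_sub_exp_neg_le
      have h2 : (0:ℝ) ≤ x ^ (-2:ℝ) := Real.rpow_nonneg hx0.le _
      calc g x ≤ (ρ * x) * x ^ (-2:ℝ) := mul_le_mul_of_nonneg_right h1 h2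
        _ = ρ * x⁻¹ := by
            rw [rpow_neg_two_eq hx0]
            field_simp
    rw [integral_const_mul, hlogMK] at hle
    exact hle
  have hI1l : ρ * (L' - Real.log M) - ρ ≤ ∫ x in Ioc M K, g x := by
    have hge : ∫ x in Ioc M K, (ρ * x⁻¹ - ρ ^ 2) ≤ ∫ x in Ioc M K, g x := by
      refine setIntegral_mono_on
        ((hinv_int.const_mul ρ).sub (integrableOn_const measure_Ioc_lt_top.ne))
        (hg_int.mono_set Ioc_subset_Ioi_self) measurableSet_Ioc ?_
      intro x hx
      have hx0 : (0:ℝ) < x := hM0.trans hx.1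
      have hu1 : ρ * x ≤ 1 := by
        have := hx.2
        rw [hKdef] at this
        calc ρ * x ≤ ρ * (1 / ρ) := mul_le_mul_of_nonneg_left this hρ.le
          _ = 1 := by field_simp
      have h1 : ρ * x - (ρ * x) ^ 2 ≤ 1 - Real.exp (-(ρ * x)) :=
        le_one_sub_exp_neg (by positivity) hu1
      have h2 : (0:ℝ) ≤ x ^ (-2:ℝ) := Real.rpow_nonneg hx0.le _
      calc ρ * x⁻¹ - ρ ^ 2 = (ρ * x - (ρ * x) ^ 2) * x ^ (-2:ℝ) := by
            rw [rpow_neg_two_eq hx0]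
            field_simp
        _ ≤ g x := mul_le_mul_of_nonneg_right h1 h2
    have hval : ∫ x in Ioc M K, (ρ * x⁻¹ - ρ ^ 2)
        = ρ * (L' - Real.log M) - ρ ^ 2 * (K - M) := by
      rw [integral_sub (hinv_int.const_mul ρ) (integrableOn_const measure_Ioc_lt_top.ne),
        integral_const_mul, hlogMK, setIntegral_const, Real.volume_real_Ioc_of_le (by linarith),
        smul_eq_mul]
      ring
    have hKM : ρ ^ 2 * (K - M) ≤ ρ := by
      have : ρ ^ 2 * (K - M) ≤ ρ ^ 2 * K := by nlinarith [hM0]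
      calc ρ ^ 2 * (K - M) ≤ ρ ^ 2 * K := this
        _ = ρ := by rw [hKdef]; field_simp
    rw [hval] at hge
    linarith
  -- assemble
  have hIu : (∫ x in Ioi M, g x) ≤ ρ * L' + ρ * (Real.log M + 1) := by
    rw [hIsplit]
    nlinarith [mul_nonneg hρ.le hMlog]
  have hIl : ρ * L' - ρ * (Real.log M + 1) ≤ ∫ x in Ioi M, g x := by
    rw [hIsplit]
    nlinarith [mul_nonneg hρ.le hMlog]
  have hCd : 0 < C - δ' := by linarith
  have h1 : (C + δ') * (∫ x in Ioi M, g x) ≤ (C + δ') * (ρ * L' + ρ * (Real.log M + 1)) :=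
    mul_le_mul_of_nonneg_left hIu (by linarith)
  have h2 : (C - δ') * (ρ * L' - ρ * (Real.log M + 1)) ≤ (C - δ') * (∫ x in Ioi M, g x) :=
    mul_le_mul_of_nonneg_left hIl hCd.le
  have hTu : ∫ x in Ioi (0:ℝ), f x ≤ ρ * m * M + (C + δ') * (ρ * L' + ρ * (Real.log M + 1)) := by
    rw [hsplit]; linarith
  have hTl : (C - δ') * (ρ * L' - ρ * (Real.log M + 1)) ≤ ∫ x in Ioi (0:ℝ), f x := by
    rw [hsplit]; linarith
  have hlogM1 : (0:ℝ) ≤ Real.log M + 1 := by linarith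
  have habs : |(∫ x in Ioi (0:ℝ), f x) - C * (ρ * L')| ≤ ρ * (δ' * L' + K₁) := by
    rw [abs_le]
    constructor
    · nlinarith [hTl, hK₁def, mul_nonneg hρ.le hlogM1, mul_nonneg (mul_nonneg hρ.le hm0) hM0.le,
        mul_nonneg hδ'pos.le (mul_nonneg hρ.le hlogM1)]
    · nlinarith [hTu, hK₁def]
  have hden : 0 < ρ * L' := mul_pos hρ hL'pos
  have heq : (∫ x in Ioi (0:ℝ), f x) / (ρ * L') - C
      = ((∫ x in Ioi (0:ℝ), f x) - C * (ρ * L')) / (ρ * L') := by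
    field_simp
  have hεL : 3 * (K₁ + 1) < ε * L' := by
    have h3 : 3 * (K₁ + 1) / ε < L' := lt_of_le_of_lt hL₀ε hL₀L
    rw [div_lt_iff₀ hε] at h3
    linarith [h3]
  have hgoal : |(∫ x in Ioi (0:ℝ), f x) / (ρ * L') - C| < ε := by
    rw [heq, abs_div, abs_of_pos hden, div_lt_iff₀ hden]
    have hlt : δ' * L' + K₁ < ε * L' := by
      have hd : δ' * L' ≤ ε / 3 * L' := mul_le_mul_of_nonneg_right hδ'ε hL'pos.le
      have he : ε / 3 * L' = ε * L' / 3 := by ring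
      linarith
    calc |(∫ x in Ioi (0:ℝ), f x) - C * (ρ * L')| ≤ ρ * (δ' * L' + K₁) := habs
      _ < ρ * (ε * L') := mul_lt_mul_of_pos_left hlt hρ
      _ = ε * (ρ * L') := by ring
  simpa [Real.dist_eq, hfdef, hL'def] using hgoal

set_option maxHeartbeats 2000000 in
/-- Let `ν` be a measure on `(0,∞)` with finite positive mean `m` whose tail satisfies
`ν̄(x) ~ C x^{-2}` as `x → ∞`, with `C > 0`. Then for every `y ≥ 0`,
`lim_{t→(1/m)⁻} L_t (1-mt)⁻² Ψ^(t)((1-mt) y / L_t) = -y - (C/m) y²`,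
where `L_t = log(1/(1-mt))`. -/
theorem Psi_rescaled_limit_index_two
    (ν : Measure ℝ) (hν0 : ν (Set.Iic 0) = 0)
    (hint : Integrable (fun l : ℝ => l) ν)
    (m : ℝ) (hm : m = ∫ l, l ∂ν) (hmpos : 0 < m)
    (C : ℝ) (hC : 0 < C)
    (htail : Tendsto (fun x : ℝ => x ^ 2 * (ν (Set.Ioi x)).toReal)
      atTop (nhds C))
    (y : ℝ) (hy : 0 ≤ y) :
    Tendsto
      (fun t : ℝ =>
        Real.log (1 / (1 - m * t)) * ((1 - m * t) ^ 2)⁻¹ *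
          Psi ν t ((1 - m * t) * y / Real.log (1 / (1 - m * t))))
      (nhdsWithin (1 / m) (Set.Iio (1 / m)))
      (nhds (-y - (C / m) * y ^ 2)) := by
  rcases eq_or_lt_of_le hy with hy0 | hy'
  · -- y = 0 : everything vanishes
    have hfun : (fun t : ℝ =>
        Real.log (1 / (1 - m * t)) * ((1 - m * t) ^ 2)⁻¹ *
          Psi ν t ((1 - m * t) * y / Real.log (1 / (1 - m * t)))) = fun _ => 0 := by
      funext t
      rw [← hy0]
      simp [Psi]
    rw [hfun, ← hy0]
    norm_num
  · -- y > 0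
    have hm' : (m : ℝ) ≠ 0 := ne_of_gt hmpos
    have hy0 : y ≠ 0 := ne_of_gt hy'
    have hcore := core_tendsto (fun x => (ν (Set.Ioi x)).toReal)
      ((nu_tail_meas' ν).ennreal_toReal) (fun x => ENNReal.toReal_nonneg) m
      (fun x hx => nu_tail_mul_le hν0 hint hm hx)
      (nu_tail_integrableOn hν0 hint hm) C hC htail
    have hεt : Tendsto (fun t : ℝ => 1 - m * t) (nhdsWithin (1/m) (Set.Iio (1/m)))
        (nhdsWithin 0 (Set.Ioi 0)) := by
      rw [tendsto_nhdsWithin_iff]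
      constructor
      · have hc : Tendsto (fun t : ℝ => 1 - m * t) (nhds (1/m)) (nhds (1 - m * (1/m))) :=
          (continuous_const.sub (continuous_const.mul continuous_id)).tendsto _
        rw [show (1 - m * (1/m)) = 0 by rw [mul_one_div, div_self hm', sub_self]] at hc
        exact hc.mono_left nhdsWithin_le_nhds
      · refine eventually_nhdsWithin_of_forall fun t ht => ?_
        simp only [Set.mem_Iio] at ht
        have h1 : m * t < 1 := by
          have h2 := mul_lt_mul_of_pos_left ht hmpos
          rwa [mul_one_div, div_self hm'] at h2
        simp only [Set.mem_Ioi]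
        linarith
    have hL : Tendsto (fun t : ℝ => Real.log (1/(1 - m * t)))
        (nhdsWithin (1/m) (Set.Iio (1/m))) atTop := by
      have h1 : Tendsto (fun t : ℝ => Real.log (1 - m * t))
          (nhdsWithin (1/m) (Set.Iio (1/m))) atBot :=
        Real.tendsto_log_nhdsGT_zero.comp hεt
      have h2 := tendsto_neg_atBot_atTop.comp h1
      refine h2.congr fun t => ?_
      simp only [Function.comp_apply, one_div, Real.log_inv]
    have hLpos : ∀ᶠ t in nhdsWithin (1/m) (Set.Iio (1/m)),
        0 < Real.log (1/(1 - m * t)) := hL.eventually_gt_atTop 0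
    have hεpos : ∀ᶠ t in nhdsWithin (1/m) (Set.Iio (1/m)), (1 - m * t) ∈ Set.Ioi 0 :=
      hεt self_mem_nhdsWithin
    have hρt : Tendsto (fun t : ℝ => (1 - m * t) * y / Real.log (1/(1 - m * t)))
        (nhdsWithin (1/m) (Set.Iio (1/m))) (nhdsWithin 0 (Set.Ioi 0)) := by
      rw [tendsto_nhdsWithin_iff]
      constructor
      · have h0 : Tendsto (fun t : ℝ => (1 - m * t) * y)
            (nhdsWithin (1/m) (Set.Iio (1/m))) (nhds (0 * y)) :=
          (hεt.mono_right nhdsWithin_le_nhds).mul_const y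
        have h1 := h0.mul hL.inv_tendsto_atTop
        rw [show (0 * y * 0 : ℝ) = 0 by ring] at h1
        refine h1.congr fun t => ?_
        simp only [Pi.inv_apply, div_eq_mul_inv]
      · filter_upwards [hεpos, hLpos] with t h1 h2
        exact div_pos (mul_pos h1 hy') h2
    have hρIoo : ∀ᶠ t in nhdsWithin (1/m) (Set.Iio (1/m)),
        (1 - m * t) * y / Real.log (1/(1 - m * t)) ∈ Set.Ioo 0 1 :=
      hρt (Ioo_mem_nhdsGT_of_mem ⟨le_rfl, one_pos⟩)
    have hF := hcore.comp hρt
    -- limit of (log u + u - log y)/u at infinity is 1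
    have hHaux : Tendsto (fun u : ℝ => (Real.log u + u - Real.log y)/u) atTop (nhds 1) := by
      have h1 : Tendsto (fun u : ℝ => Real.log u / u) atTop (nhds 0) := by
        simpa using Real.isLittleO_log_id_atTop.tendsto_div_nhds_zero
      have h2 : Tendsto (fun u : ℝ => Real.log y / u) atTop (nhds 0) :=
        tendsto_const_nhds.div_atTop tendsto_id
      have h3 : Tendsto (fun u : ℝ => u / u) atTop (nhds 1) := by
        refine Tendsto.congr' ?_ (tendsto_const_nhds (x := (1:ℝ)))
        filter_upwards [eventually_ge_atTop (1:ℝ)] with u hu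
        rw [div_self (by linarith)]
      have h4 := (h1.add h3).sub h2
      rw [show ((0:ℝ) + 1 - 0) = 1 by ring] at h4
      refine h4.congr fun u => ?_
      rw [sub_div, add_div]
    have hH : Tendsto (fun t : ℝ =>
        ((1 - m * t) * y / Real.log (1/(1 - m * t))) *
          Real.log (1/((1 - m * t) * y / Real.log (1/(1 - m * t)))) / (1 - m * t))
        (nhdsWithin (1/m) (Set.Iio (1/m))) (nhds y) := by
      have h4 := hHaux.comp hL
      have h5 := (tendsto_const_nhds (x := y)).mul h4
      rw [mul_one] at h5
      refine Tendsto.congr' ?_ h5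
      filter_upwards [hεpos, hLpos] with t h1 h2
      have hε0 : (1 - m * t) ≠ 0 := ne_of_gt h1
      have hL0 : Real.log (1/(1 - m * t)) ≠ 0 := ne_of_gt h2
      have hlogε : Real.log (1 - m * t) = -Real.log (1/(1 - m * t)) := by
        rw [one_div, Real.log_inv]; ring
      have hinv : 1/((1 - m * t) * y / Real.log (1/(1 - m * t)))
          = Real.log (1/(1 - m * t)) / ((1 - m * t) * y) := by
        rw [one_div_div]
      have hlog : Real.log (1/((1 - m * t) * y / Real.log (1/(1 - m * t))))
          = Real.log (Real.log (1/(1 - m * t))) + Real.log (1/(1 - m * t)) - Real.log y := by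
        rw [hinv, Real.log_div hL0 (mul_ne_zero hε0 hy0), Real.log_mul hε0 hy0, hlogε]
        ring
      rw [hlog]
      simp only [Function.comp_apply]
      field_simp
    -- assemble the limit
    have htt : Tendsto (fun t : ℝ => t) (nhdsWithin (1/m) (Set.Iio (1/m))) (nhds (1/m)) :=
      tendsto_id.mono_left nhdsWithin_le_nhds
    have hmain := (tendsto_const_nhds (x := -y)).sub
      (((htt.mul (tendsto_const_nhds (x := y))).mul (hF.mul hH)))
    rw [show (-y - 1/m * y * (C * y) : ℝ) = -y - C/m * y^2 by ring] at hmain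
    refine Tendsto.congr' ?_ hmain
    filter_upwards [hεpos, hLpos, hρIoo] with t h1 h2 h3
    have hε0 : (1 - m * t) ≠ 0 := ne_of_gt h1
    have hL0 : Real.log (1/(1 - m * t)) ≠ 0 := ne_of_gt h2
    have hρpos : 0 < (1 - m * t) * y / Real.log (1/(1 - m * t)) := h3.1
    have hA : 0 < Real.log (1/((1 - m * t) * y / Real.log (1/(1 - m * t)))) := by
      apply Real.log_pos
      rw [lt_div_iff₀ hρpos, one_mul]
      exact h3.2
    simp only [Function.comp_apply, Psi]
    rw [psi_repr hν0 hint hm hρpos]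
    set E : ℝ := 1 - m * t with hE
    set LL : ℝ := Real.log (1/E) with hLL
    set R : ℝ := E * y / LL with hR
    set A : ℝ := Real.log (1/R) with hAdef
    set TT : ℝ := ∫ x in Set.Ioi (0:ℝ), (1 - Real.exp (-(R * x))) * (ν (Set.Ioi x)).toReal
      with hTT
    have hRA0 : R * A ≠ 0 := ne_of_gt (mul_pos hρpos hA)
    have hcancel : TT / (R * A) * (R * A / E) = TT / E := by
      rw [div_mul_div_comm, mul_comm TT (R * A), mul_div_mul_left _ _ hRA0]
    rw [hcancel, hR]
    field_simp
    ring
end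

section
/- If ν has finite second moment m₂ = ∫_0^∞ l² ν(dl) < ∞ and λ > 0, then for every y ≥ 0, lim_{x→∞} x Ψ^{(t_x)}(y/√x) = −λ y − (m₂/(2m)) y², where t_x = (1 − λ/√x)/m (defined for x large enough that t_x ∈ [0, 1/m)). -/
open MeasureTheory Filter

lemma aux_nonneg (u : ℝ) : 0 ≤ Real.exp (-u) - 1 + u := by
  have := Real.add_one_le_exp (-u); linarith

lemma aux_cubic {u : ℝ} (hu : 0 ≤ u) (hu1 : u ≤ 1) :
    |Real.exp (-u) - 1 + u - u ^ 2 / 2| ≤ 2 / 9 * u ^ 3 := by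
  have h := Real.exp_bound (x := -u) (by rwa [abs_neg, abs_of_nonneg hu]) (n := 3) (by norm_num)
  have hs : ∑ i ∈ Finset.range 3, (-u) ^ i / (Nat.factorial i) = 1 - u + u ^ 2 / 2 := by
    simp [Finset.sum_range_succ, Nat.factorial]; ring
  rw [hs, abs_neg, abs_of_nonneg hu] at h
  calc |Real.exp (-u) - 1 + u - u ^ 2 / 2| = |Real.exp (-u) - (1 - u + u ^ 2 / 2)| := by ring_nf
    _ ≤ u ^ 3 * ((3 : ℕ).succ / ((3 : ℕ).factorial * 3)) := h
    _ = 2 / 9 * u ^ 3 := by norm_num [Nat.factorial]; ring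

lemma aux_quad {u : ℝ} (hu : 0 ≤ u) : Real.exp (-u) - 1 + u ≤ u ^ 2 := by
  rcases le_or_gt u 1 with h1 | h1
  · have h := (abs_le.1 (aux_cubic hu h1)).2
    nlinarith [pow_le_pow_left₀ hu h1 2, pow_le_pow_left₀ hu h1 3]
  · have h2 : Real.exp (-u) ≤ 1 := Real.exp_le_one_iff.2 (by linarith)
    nlinarith

lemma sqrt_tendsto : Tendsto Real.sqrt atTop atTop := by
  refine tendsto_atTop.2 fun b => ?_
  filter_upwards [eventually_ge_atTop (b ^ 2)] with x h1
  calc b ≤ √(b ^ 2) := by rw [Real.sqrt_sq_eq_abs]; exact le_abs_self b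
    _ ≤ √x := Real.sqrt_le_sqrt h1

lemma pointwise_lim {y : ℝ} (hy : 0 ≤ y) {l : ℝ} (hl : 0 < l) :
    Tendsto (fun x : ℝ => x * (Real.exp (-(y / Real.sqrt x * l)) - 1 + y / Real.sqrt x * l))
      atTop (nhds (y ^ 2 / 2 * l ^ 2)) := by
  rw [← tendsto_sub_nhds_zero_iff]
  apply squeeze_zero_norm' (a := fun x => 2 / 9 * (y ^ 3 * l ^ 3) / Real.sqrt x)
  · filter_upwards [eventually_ge_atTop 1, sqrt_tendsto.eventually_ge_atTop (y * l)]
      with x hx hsx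
    have hx0 : (0 : ℝ) < x := by linarith
    have hs : 0 < Real.sqrt x := Real.sqrt_pos.2 hx0
    have hs2 : Real.sqrt x ^ 2 = x := Real.sq_sqrt hx0.le
    set u : ℝ := y / Real.sqrt x * l with hu_def
    have hu0 : 0 ≤ u := by positivity
    have hu1 : u ≤ 1 := by
      rw [hu_def, div_mul_eq_mul_div, div_le_one hs]; linarith [mul_comm y l]
    have hxu2 : x * (u ^ 2 / 2) = y ^ 2 / 2 * l ^ 2 := by
      rw [hu_def]; field_simp; rw [hs2]; ring
    have hxu3 : x * (2 / 9 * u ^ 3) = 2 / 9 * (y ^ 3 * l ^ 3) / Real.sqrt x := by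
      rw [hu_def]
      have : Real.sqrt x ^ 3 = Real.sqrt x * x := by rw [pow_succ, hs2]; ring
      field_simp
      rw [hs2]; ring
    have key : x * (Real.exp (-u) - 1 + u) - y ^ 2 / 2 * l ^ 2
        = x * (Real.exp (-u) - 1 + u - u ^ 2 / 2) := by rw [← hxu2]; ring
    rw [key, Real.norm_eq_abs, abs_mul, abs_of_pos hx0, ← hxu3]
    exact mul_le_mul_of_nonneg_left (aux_cubic hu0 hu1) hx0.le
  · exact Tendsto.div_atTop tendsto_const_nhds sqrt_tendsto

lemma tendstoG (ν : Measure ℝ) (hν0 : ν (Set.Iic 0) = 0)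
    (hint2 : Integrable (fun l : ℝ => l ^ 2) ν)
    (m2 : ℝ) (hm2 : m2 = ∫ l, l ^ 2 ∂ν) (y : ℝ) (hy : 0 ≤ y) :
    Tendsto (fun x : ℝ =>
        ∫ l, x * (Real.exp (-(y / Real.sqrt x * l)) - 1 + y / Real.sqrt x * l) ∂ν)
      atTop (nhds (y ^ 2 / 2 * m2)) := by
  have hae : ∀ᵐ l ∂ν, 0 < l := by
    rw [ae_iff]
    have : {a : ℝ | ¬ 0 < a} = Set.Iic 0 := by ext a; simp [not_lt]
    rw [this]; exact hν0
  have key := tendsto_integral_filter_of_dominated_convergence (μ := ν) (l := atTop)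
    (F := fun x l => x * (Real.exp (-(y / Real.sqrt x * l)) - 1 + y / Real.sqrt x * l))
    (f := fun l => y ^ 2 / 2 * l ^ 2) (bound := fun l => y ^ 2 * l ^ 2)
    (Eventually.of_forall fun x => by
      apply Continuous.aestronglyMeasurable; fun_prop)
    ?_ (hint2.const_mul (y ^ 2)) (by filter_upwards [hae] with l hl using pointwise_lim hy hl)
  · have : ∫ l, y ^ 2 / 2 * l ^ 2 ∂ν = y ^ 2 / 2 * m2 := by
      rw [MeasureTheory.integral_const_mul, hm2]
    rwa [this] at key
  · filter_upwards [eventually_ge_atTop 1] with x hx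
    filter_upwards [hae] with l hl
    have hx0 : (0 : ℝ) < x := by linarith
    have hs : 0 < Real.sqrt x := Real.sqrt_pos.2 hx0
    have hs2 : Real.sqrt x ^ 2 = x := Real.sq_sqrt hx0.le
    set u : ℝ := y / Real.sqrt x * l with hu_def
    have hu0 : 0 ≤ u := by positivity
    have hxu2 : x * u ^ 2 = y ^ 2 * l ^ 2 := by
      rw [hu_def]; field_simp; rw [hs2]; ring
    rw [Real.norm_eq_abs, abs_mul, abs_of_pos hx0,
      abs_of_nonneg (aux_nonneg u), ← hxu2]
    exact mul_le_mul_of_nonneg_left (aux_quad hu0) hx0.le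

/-- If `ν` (a measure on `(0,∞)` with finite positive mean `m`) has finite second
moment `m₂` and `λ > 0`, then for every `y ≥ 0`,
`lim_{x→∞} x Ψ^(t_x)(y/√x) = -λ y - (m₂/(2m)) y²`, where `t_x = (1 - λ/√x)/m`. -/
theorem Psi_window_limit_finite_second_moment
    (ν : Measure ℝ) (hν0 : ν (Set.Iic 0) = 0)
    (hint : Integrable (fun l : ℝ => l) ν)
    (m : ℝ) (hm : m = ∫ l, l ∂ν) (hmpos : 0 < m)
    (hint2 : Integrable (fun l : ℝ => l ^ 2) ν)
    (m2 : ℝ) (hm2 : m2 = ∫ l, l ^ 2 ∂ν)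
    (lam : ℝ) (hlam : 0 < lam)
    (y : ℝ) (hy : 0 ≤ y) :
    Tendsto
      (fun x : ℝ =>
        x * Psi ν ((1 - lam / Real.sqrt x) / m) (y / Real.sqrt x))
      atTop (nhds (-(lam * y) - (m2 / (2 * m)) * y ^ 2)) := by
  have hae : ∀ᵐ l ∂ν, 0 < l := by
    rw [ae_iff]
    have : {a : ℝ | ¬ 0 < a} = Set.Iic 0 := by ext a; simp [not_lt]
    rw [this]; exact hν0
  have hm' : m ≠ 0 := hmpos.ne'
  have hG := tendstoG ν hν0 hint2 m2 hm2 y hy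
  have hT : Tendsto (fun x : ℝ => (1 - lam / Real.sqrt x) / m) atTop (nhds (1 / m)) := by
    have h0 : Tendsto (fun x : ℝ => lam / Real.sqrt x) atTop (nhds 0) :=
      Tendsto.div_atTop tendsto_const_nhds sqrt_tendsto
    have h1 := (tendsto_const_nhds (α := ℝ) (f := atTop) (x := (1 : ℝ))).sub h0
    simpa using h1.div_const m
  have hfin : Tendsto (fun x : ℝ => -(lam * y) - ((1 - lam / Real.sqrt x) / m) *
        ∫ l, x * (Real.exp (-(y / Real.sqrt x * l)) - 1 + y / Real.sqrt x * l) ∂ν)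
      atTop (nhds (-(lam * y) - (m2 / (2 * m)) * y ^ 2)) := by
    have h := (tendsto_const_nhds (α := ℝ) (f := atTop) (x := -(lam * y))).sub (hT.mul hG)
    have hval : -(lam * y) - 1 / m * (y ^ 2 / 2 * m2) = -(lam * y) - m2 / (2 * m) * y ^ 2 := by
      field_simp
    rwa [hval] at h
  refine Tendsto.congr' ?_ hfin
  filter_upwards [eventually_ge_atTop 1] with x hx
  have hx0 : (0 : ℝ) < x := by linarith
  have hs : 0 < Real.sqrt x := Real.sqrt_pos.2 hx0
  have hs2 : Real.sqrt x ^ 2 = x := Real.sq_sqrt hx0.le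
  set ρ : ℝ := y / Real.sqrt x with hρ_def
  have hρ0 : 0 ≤ ρ := by positivity
  have hg1 : Integrable (fun l => 1 - Real.exp (-(ρ * l))) ν := by
    refine (hint.const_mul ρ).mono' ?_ ?_
    · apply Continuous.aestronglyMeasurable; fun_prop
    · filter_upwards [hae] with l hl
      have h1 : Real.exp (-(ρ * l)) ≤ 1 :=
        Real.exp_le_one_iff.2 (neg_nonpos.2 (mul_nonneg hρ0 hl.le))
      have h2 : 1 - ρ * l ≤ Real.exp (-(ρ * l)) := by
        have := Real.add_one_le_exp (-(ρ * l)); linarith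
      rw [Real.norm_eq_abs, abs_of_nonneg (by linarith)]; linarith
  have hsplit : ∫ l, (Real.exp (-(ρ * l)) - 1 + ρ * l) ∂ν
      = ρ * m - ∫ l, (1 - Real.exp (-(ρ * l))) ∂ν := by
    have heq : (fun l => Real.exp (-(ρ * l)) - 1 + ρ * l)
        = fun l => ρ * l - (1 - Real.exp (-(ρ * l))) := by funext l; ring
    rw [heq, integral_sub (hint.const_mul ρ) hg1, MeasureTheory.integral_const_mul, ← hm]
  have hGx : (∫ l, x * (Real.exp (-(ρ * l)) - 1 + ρ * l) ∂ν)
      = x * (ρ * m - ∫ l, (1 - Real.exp (-(ρ * l))) ∂ν) := by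
    rw [MeasureTheory.integral_const_mul, hsplit]
  rw [hGx, Psi]
  set I : ℝ := ∫ l, (1 - Real.exp (-(ρ * l))) ∂ν with hI_def
  rw [hρ_def, ← hs2]
  field_simp
  rw [Real.sqrt_sq hs.le]; ring
end
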